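/- arXiv:1212.0115 — 8 statements merged into one kernel-verified Lean document; each statement's English description precedes it below -/
import Mathlib

section
/- Let G ⊊ ℝⁿ be a domain (nonempty open connected proper subset), let z₀ ∈ G, and let z ∈ ∂G satisfy δ_G(z₀) = |z₀ − z|. Then for all points u, v on the half-open segment [z₀, z) (so u, v ∈ G), one has k_G(u,v) = j_G(u,v) = |log(δ_G(u)/δ_G(v))| = |log((δ_G(z₀) − |z₀−u|)/(δ_G(z₀) − |z₀−v|))|. -/
open Set Metric MeasureTheory intervalIntegral

/-- The Euclidean distance from a point to the boundary of `G`. -/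
noncomputable def bdist {n : ℕ} (G : Set (EuclideanSpace ℝ (Fin n)))
    (x : EuclideanSpace ℝ (Fin n)) : ℝ :=
  Metric.infDist x (frontier G)

/-- The quasihyperbolic length of a path `γ` (parametrized on `[0,1]`) in `G`. -/
noncomputable def qhLength {n : ℕ} (G : Set (EuclideanSpace ℝ (Fin n)))
    (γ : ℝ → EuclideanSpace ℝ (Fin n)) : ℝ :=
  ∫ t in (0:ℝ)..1, ‖deriv γ t‖ / bdist G (γ t)

/-- The quasihyperbolic metric of `G`: the infimum of quasihyperbolic lengths of
paths joining `x` and `y` inside `G`. -/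
noncomputable def qhDist {n : ℕ} (G : Set (EuclideanSpace ℝ (Fin n)))
    (x y : EuclideanSpace ℝ (Fin n)) : ℝ :=
  ⨅ γ : {γ : ℝ → EuclideanSpace ℝ (Fin n) // γ 0 = x ∧ γ 1 = y ∧
      (∀ t ∈ Set.Icc (0:ℝ) 1, γ t ∈ G) ∧ ContDiffOn ℝ 1 γ (Set.Icc 0 1)},
    qhLength G γ.1

/-- The distance ratio metric of `G`. -/
noncomputable def jDist {n : ℕ} (G : Set (EuclideanSpace ℝ (Fin n)))
    (x y : EuclideanSpace ℝ (Fin n)) : ℝ :=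
  Real.log (1 + dist x y / min (bdist G x) (bdist G y))


lemma bdist_pos {n : ℕ} {G : Set (EuclideanSpace ℝ (Fin n))} (hGo : IsOpen G)
    (hne : (frontier G).Nonempty) {x : EuclideanSpace ℝ (Fin n)} (hx : x ∈ G) :
    0 < bdist G x := by
  refine (isClosed_frontier.notMem_iff_infDist_pos hne).1 ?_
  rw [hGo.frontier_eq]
  exact fun h => h.2 hx

lemma ball_subset_of_bdist {n : ℕ} {G : Set (EuclideanSpace ℝ (Fin n))} (hGo : IsOpen G)
    {x : EuclideanSpace ℝ (Fin n)} (hx : x ∈ G) : ball x (bdist G x) ⊆ G := by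
  intro w hw
  by_contra hwG
  have hseg : IsPreconnected (segment ℝ x w) := (convex_segment x w).isPreconnected
  have h1 : ∀ y ∈ segment ℝ x w, y ∉ frontier G := by
    intro y hy hyf
    have h2 : dist x y ≤ dist x w := by
      have := (mem_segment_iff_wbtw.1 hy).dist_add_dist
      have := dist_nonneg (x := y) (y := w)
      linarith
    have h3 := Metric.infDist_le_dist_of_mem (x := x) hyf
    rw [mem_ball, dist_comm] at hw
    have : bdist G x ≤ dist x y := h3
    linarith
  have hsub : segment ℝ x w ⊆ G ∪ (closure G)ᶜ := by
    intro y hy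
    by_cases hyG : y ∈ closure G
    · left
      by_contra hyG'
      exact h1 y hy ⟨hyG, by rwa [hGo.interior_eq]⟩
    · right; exact hyG
  rcases hseg.subset_or_subset hGo isClosed_closure.isOpen_compl
      (disjoint_compl_right.mono_left subset_closure) hsub with h | h
  · exact hwG (h (right_mem_segment ℝ x w))
  · exact (h (left_mem_segment ℝ x w)) (subset_closure hx)

lemma seg_bdist {n : ℕ} {G : Set (EuclideanSpace ℝ (Fin n))}
    {z₀ z : EuclideanSpace ℝ (Fin n)} (hz : z ∈ frontier G)
    (hd : bdist G z₀ = dist z₀ z) {s : ℝ} (hs : s ∈ Icc (0:ℝ) 1) :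
    bdist G (z₀ + s • (z - z₀)) = (1 - s) * bdist G z₀ := by
  set w := z₀ + s • (z - z₀) with hw
  have hr : dist z₀ z = ‖z - z₀‖ := by rw [dist_eq_norm, ← norm_neg, neg_sub]
  have hwz : dist w z = (1 - s) * ‖z - z₀‖ := by
    have : w - z = -((1 - s) • (z - z₀)) := by rw [hw]; module
    rw [dist_eq_norm, this, norm_neg, norm_smul, Real.norm_eq_abs,
      abs_of_nonneg (by linarith [hs.2])]
  have hwz₀ : dist z₀ w = s * ‖z - z₀‖ := by
    have : z₀ - w = -(s • (z - z₀)) := by rw [hw]; module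
    rw [dist_eq_norm, this, norm_neg, norm_smul, Real.norm_eq_abs,
      abs_of_nonneg hs.1]
  have hub : bdist G w ≤ (1 - s) * ‖z - z₀‖ := hwz ▸ Metric.infDist_le_dist_of_mem hz
  have hlb : bdist G z₀ ≤ bdist G w + dist z₀ w := Metric.infDist_le_infDist_add_dist
  rw [hd, hr] at hlb ⊢
  rw [hwz₀] at hlb
  nlinarith [hub, hlb]

lemma ae_ne_one : ∀ᵐ x : ℝ ∂volume, x ≠ 1 := by
  refine MeasureTheory.ae_iff.2 ?_
  have : {a : ℝ | ¬a ≠ 1} = {1} := by ext x; simp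
  rw [this, Real.volume_singleton]

lemma deriv_eq_derivWithin {n : ℕ} {γ : ℝ → EuclideanSpace ℝ (Fin n)}
    (hγ : ContDiffOn ℝ 1 γ (Icc 0 1)) {x : ℝ} (hx : x ∈ Ioo (0:ℝ) 1) :
    deriv γ x = derivWithin γ (Icc 0 1) x := by
  have hmem : Icc (0:ℝ) 1 ∈ nhds x := Icc_mem_nhds hx.1 hx.2
  rw [derivWithin_of_mem_nhds hmem]

lemma qhLength_eq {n : ℕ} {G : Set (EuclideanSpace ℝ (Fin n))}
    {γ : ℝ → EuclideanSpace ℝ (Fin n)} (hγ : ContDiffOn ℝ 1 γ (Icc 0 1)) :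
    qhLength G γ = ∫ t in (0:ℝ)..1, ‖derivWithin γ (Icc 0 1) t‖ / bdist G (γ t) := by
  refine intervalIntegral.integral_congr_ae ?_
  filter_upwards [ae_ne_one] with x hx1 hx
  rw [uIoc_of_le (by norm_num : (0:ℝ) ≤ 1)] at hx
  have hxo : x ∈ Ioo (0:ℝ) 1 := ⟨hx.1, lt_of_le_of_ne hx.2 hx1⟩
  rw [deriv_eq_derivWithin hγ hxo]

lemma qhLength_ge_left {n : ℕ} {G : Set (EuclideanSpace ℝ (Fin n))}
    (hGo : IsOpen G) (hne : (frontier G).Nonempty)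
    {γ : ℝ → EuclideanSpace ℝ (Fin n)}
    (hγG : ∀ t ∈ Icc (0:ℝ) 1, γ t ∈ G) (hγ : ContDiffOn ℝ 1 γ (Icc 0 1)) :
    Real.log (1 + dist (γ 0) (γ 1) / bdist G (γ 0)) ≤ qhLength G γ := by
  have h01 : (0:ℝ) ≤ 1 := zero_le_one
  have huIcc : uIcc (0:ℝ) 1 = Icc 0 1 := uIcc_of_le h01
  set g : ℝ → ℝ := fun t => ‖derivWithin γ (Icc 0 1) t‖ with hg
  have hgc : ContinuousOn g (Icc 0 1) :=
    (hγ.continuousOn_derivWithin (uniqueDiffOn_Icc one_pos) le_rfl).norm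
  set s : ℝ → ℝ := fun t => ∫ x in (0:ℝ)..t, g x with hsdef
  have hgint : ∀ t ∈ Icc (0:ℝ) 1, IntervalIntegrable g volume 0 t := by
    intro t ht
    exact (hgc.mono (by rw [uIcc_of_le ht.1]; exact Icc_subset_Icc le_rfl ht.2)).intervalIntegrable
  have hscont : ContinuousOn s (Icc 0 1) := by
    rw [← huIcc]
    exact continuousOn_primitive_interval (huIcc ▸ hgc.integrableOn_Icc)
  have hsnn : ∀ t ∈ Icc (0:ℝ) 1, 0 ≤ s t := fun t ht =>
    intervalIntegral.integral_nonneg ht.1 (fun x _ => norm_nonneg _)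
  -- FTC for γ
  have hftc : ∀ t ∈ Icc (0:ℝ) 1, γ t - γ 0 =
      ∫ x in (0:ℝ)..t, derivWithin γ (Icc 0 1) x := by
    intro t ht
    rw [intervalIntegral.integral_eq_sub_of_hasDeriv_right_of_le ht.1
      (hγ.continuousOn.mono (Icc_subset_Icc le_rfl ht.2))
      (fun x hx => ?_)
      (((hγ.continuousOn_derivWithin (uniqueDiffOn_Icc one_pos) le_rfl).mono
        (by rw [uIcc_of_le ht.1]; exact Icc_subset_Icc le_rfl ht.2)).intervalIntegrable)]
    have hxo : x ∈ Ioo (0:ℝ) 1 := ⟨hx.1, lt_of_lt_of_le hx.2 ht.2⟩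
    have hdiff : DifferentiableAt ℝ γ x :=
      ((hγ.differentiableOn one_ne_zero) x (Ioo_subset_Icc_self hxo)).differentiableAt
        (Icc_mem_nhds hxo.1 hxo.2)
    rw [← deriv_eq_derivWithin hγ hxo]
    exact hdiff.hasDerivAt.hasDerivWithinAt
  have hdist : ∀ t ∈ Icc (0:ℝ) 1, dist (γ 0) (γ t) ≤ s t := by
    intro t ht
    rw [dist_comm, dist_eq_norm, hftc t ht]
    exact intervalIntegral.norm_integral_le_integral_norm ht.1
  set δ0 : ℝ := bdist G (γ 0) with hδ0def
  have hδ0 : 0 < δ0 := bdist_pos hGo hne (hγG 0 ⟨le_rfl, h01⟩)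
  have hδpos : ∀ t ∈ Icc (0:ℝ) 1, 0 < bdist G (γ t) := fun t ht =>
    bdist_pos hGo hne (hγG t ht)
  have hbd : ∀ t ∈ Icc (0:ℝ) 1, bdist G (γ t) ≤ δ0 + s t := by
    intro t ht
    have : bdist G (γ t) ≤ bdist G (γ 0) + dist (γ t) (γ 0) :=
      Metric.infDist_le_infDist_add_dist
    rw [dist_comm] at this
    exact this.trans (by linarith [hdist t ht])
  have hspos : ∀ t ∈ Icc (0:ℝ) 1, 0 < δ0 + s t := fun t ht => by
    linarith [hsnn t ht]
  set h : ℝ → ℝ := fun t => g t / (δ0 + s t) with hhdef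
  set Φ : ℝ → ℝ := fun t => g t / bdist G (γ t) with hΦdef
  have hhcont : ContinuousOn h (Icc 0 1) :=
    hgc.div (continuousOn_const.add hscont) (fun t ht => (hspos t ht).ne')
  have hΦcont : ContinuousOn Φ (Icc 0 1) :=
    hgc.div ((Metric.continuous_infDist_pt _).comp_continuousOn hγ.continuousOn)
      (fun t ht => (hδpos t ht).ne')
  have hq : qhLength G γ = ∫ t in (0:ℝ)..1, Φ t := qhLength_eq hγ
  -- derivative of s
  have hsderiv : ∀ x ∈ Ioo (0:ℝ) 1, HasDerivAt s (g x) x := by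
    intro x hx
    refine intervalIntegral.integral_hasDerivAt_right (hgint x (Ioo_subset_Icc_self hx))
      ((hgc.mono Ioo_subset_Icc_self).stronglyMeasurableAtFilter isOpen_Ioo x hx)
      (((hgc.mono Ioo_subset_Icc_self).continuousAt (isOpen_Ioo.mem_nhds hx)))
  -- integral of h
  have hhint : ∫ t in (0:ℝ)..1, h t = Real.log (δ0 + s 1) - Real.log (δ0 + s 0) := by
    have := intervalIntegral.integral_eq_sub_of_hasDeriv_right_of_le h01
      (f := fun t => Real.log (δ0 + s t)) (f' := h)
      ((continuousOn_const.add hscont).log (fun t ht => (hspos t ht).ne'))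
      (fun x hx => ?_)
      ((hhcont.mono huIcc.subset).intervalIntegrable)
    · exact this
    · have hds : HasDerivAt (fun t => δ0 + s t) (g x) x := by
        have h' := (hasDerivAt_const x δ0).add (hsderiv x hx)
        rwa [zero_add] at h'
      have := (hds.log (hspos x (Ioo_subset_Icc_self hx)).ne')
      exact this.hasDerivWithinAt
  have hs0 : s 0 = 0 := intervalIntegral.integral_same
  -- comparison
  have hcmp : ∫ t in (0:ℝ)..1, h t ≤ ∫ t in (0:ℝ)..1, Φ t := by
    refine intervalIntegral.integral_mono_on h01
      ((hhcont.mono huIcc.subset).intervalIntegrable)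
      ((hΦcont.mono huIcc.subset).intervalIntegrable) (fun x hx => ?_)
    exact div_le_div_of_nonneg_left (norm_nonneg _) (hδpos x hx) (hbd x hx)
  rw [hq]
  refine le_trans ?_ hcmp
  have hs1 : (0:ℝ) < δ0 + s 1 := by linarith [hsnn 1 ⟨h01, le_rfl⟩]
  rw [hhint, hs0, add_zero, ← Real.log_div hs1.ne' hδ0.ne']
  have h1 : (0:ℝ) < 1 + dist (γ 0) (γ 1) / δ0 := by positivity
  refine Real.log_le_log h1 ?_
  have hd1 := hdist 1 ⟨h01, le_rfl⟩
  rw [add_div, div_self hδ0.ne']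
  have h2 : dist (γ 0) (γ 1) / δ0 ≤ s 1 / δ0 := by gcongr
  linarith

lemma contDiffOn_reverse {n : ℕ} {γ : ℝ → EuclideanSpace ℝ (Fin n)}
    (hγ : ContDiffOn ℝ 1 γ (Icc 0 1)) :
    ContDiffOn ℝ 1 (fun t => γ (1 - t)) (Icc 0 1) :=
  hγ.comp ((contDiff_const.sub contDiff_id).contDiffOn)
    (fun t ht => by
      simp only [mem_preimage, mem_Icc] at ht ⊢
      exact ⟨by linarith [ht.2], by linarith [ht.1]⟩)

lemma qhLength_reverse {n : ℕ} {G : Set (EuclideanSpace ℝ (Fin n))}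
    {γ : ℝ → EuclideanSpace ℝ (Fin n)} (hγ : ContDiffOn ℝ 1 γ (Icc 0 1)) :
    qhLength G (fun t => γ (1 - t)) = qhLength G γ := by
  have step1 : qhLength G (fun t => γ (1 - t)) =
      ∫ t in (0:ℝ)..1, ‖deriv γ (1 - t)‖ / bdist G (γ (1 - t)) := by
    refine intervalIntegral.integral_congr_ae ?_
    filter_upwards [ae_ne_one] with x hx1 hx
    rw [uIoc_of_le (by norm_num : (0:ℝ) ≤ 1)] at hx
    have hxo : x ∈ Ioo (0:ℝ) 1 := ⟨hx.1, lt_of_le_of_ne hx.2 hx1⟩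
    have hyo : 1 - x ∈ Ioo (0:ℝ) 1 := ⟨by linarith [hxo.2], by linarith [hxo.1]⟩
    have hdiff : DifferentiableAt ℝ γ (1 - x) :=
      ((hγ.differentiableOn one_ne_zero) (1 - x) (Ioo_subset_Icc_self hyo)).differentiableAt
        (Icc_mem_nhds hyo.1 hyo.2)
    have h1 : HasDerivAt (fun y : ℝ => 1 - y) (-1) x := by
      simpa using (hasDerivAt_id' x).const_sub (1:ℝ)
    have h2 : HasDerivAt (fun t => γ (1 - t)) ((-1 : ℝ) • deriv γ (1 - x)) x :=
      HasDerivAt.scomp x hdiff.hasDerivAt h1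
    rw [h2.deriv]
    simp [norm_smul]
  rw [step1]
  have := intervalIntegral.integral_comp_sub_left
    (fun t => ‖deriv γ t‖ / bdist G (γ t)) 1 (a := 0) (b := 1)
  norm_num at this
  rw [this]
  rfl

lemma qhLength_ge_right {n : ℕ} {G : Set (EuclideanSpace ℝ (Fin n))}
    (hGo : IsOpen G) (hne : (frontier G).Nonempty)
    {γ : ℝ → EuclideanSpace ℝ (Fin n)}
    (hγG : ∀ t ∈ Icc (0:ℝ) 1, γ t ∈ G) (hγ : ContDiffOn ℝ 1 γ (Icc 0 1)) :
    Real.log (1 + dist (γ 0) (γ 1) / bdist G (γ 1)) ≤ qhLength G γ := by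
  have hG' : ∀ t ∈ Icc (0:ℝ) 1, (fun t => γ (1 - t)) t ∈ G := by
    intro t ht
    exact hγG (1 - t) ⟨by linarith [ht.2], by linarith [ht.1]⟩
  have := qhLength_ge_left hGo hne hG' (contDiffOn_reverse hγ)
  rw [qhLength_reverse hγ] at this
  simpa [dist_comm] using this

lemma param_nonneg {a b t : ℝ} (ha : 0 ≤ a) (hb : 0 ≤ b) (ht : t ∈ Icc (0:ℝ) 1) :
    0 ≤ a + t * (b - a) := by
  rcases le_total a b with h | h
  · nlinarith [ht.1, ht.2]
  · nlinarith [ht.1, ht.2]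

lemma param_lt_one {a b t : ℝ} (ha : a < 1) (hb : b < 1) (ht : t ∈ Icc (0:ℝ) 1) :
    a + t * (b - a) < 1 := by
  rcases le_total a b with h | h
  · nlinarith [ht.1, ht.2]
  · nlinarith [ht.1, ht.2]

lemma qhLength_straight {n : ℕ} {G : Set (EuclideanSpace ℝ (Fin n))}
    {z₀ z : EuclideanSpace ℝ (Fin n)} (hz : z ∈ frontier G)
    (hd : bdist G z₀ = dist z₀ z) (hr : 0 < bdist G z₀)
    {a b : ℝ} (ha : a ∈ Ico (0:ℝ) 1) (hb : b ∈ Ico (0:ℝ) 1) :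
    qhLength G (fun t => z₀ + (a + t * (b - a)) • (z - z₀)) =
      |Real.log ((1 - a) / (1 - b))| := by
  set r : ℝ := bdist G z₀ with hrdef
  have hnorm : ‖z - z₀‖ = r := by rw [hd, dist_eq_norm, norm_sub_rev]
  set c : ℝ := b - a with hcdef
  set σ : ℝ → EuclideanSpace ℝ (Fin n) := fun t => z₀ + (a + t * c) • (z - z₀) with hσ
  have hderiv : ∀ t : ℝ, HasDerivAt σ (c • (z - z₀)) t := by
    intro t
    have h1 : HasDerivAt (fun t : ℝ => a + t * c) c t := by
      simpa using (((hasDerivAt_id' t).mul_const c).const_add a)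
    exact (h1.smul_const (z - z₀)).const_add z₀
  have hppos : ∀ t ∈ Icc (0:ℝ) 1, 0 < 1 - (a + t * c) := by
    intro t ht
    have := param_lt_one ha.2 hb.2 ht
    rw [← hcdef] at this
    linarith
  have hbd : ∀ t ∈ Icc (0:ℝ) 1, bdist G (σ t) = (1 - (a + t * c)) * r := by
    intro t ht
    exact seg_bdist hz hd ⟨param_nonneg ha.1 hb.1 ht, (param_lt_one ha.2 hb.2 ht).le⟩
  have hstep : qhLength G σ = ∫ t in (0:ℝ)..1, |c| / (1 - (a + t * c)) := by
    refine intervalIntegral.integral_congr (fun t ht => ?_)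
    rw [uIcc_of_le zero_le_one] at ht
    rw [(hderiv t).deriv, hbd t ht, norm_smul, Real.norm_eq_abs, hnorm,
      mul_div_mul_right _ _ hr.ne']
  rw [hstep]
  rcases eq_or_ne c 0 with hc | hc
  · have hab : a = b := by rw [hcdef] at hc; linarith [sub_eq_zero.1 hc]
    simp [hc, hab, div_self (by linarith [hb.2] : (1:ℝ) - b ≠ 0)]
  · set F : ℝ → ℝ := fun t => -(|c| / c) * Real.log (1 - (a + t * c)) with hF
    have hFd : ∀ t ∈ uIcc (0:ℝ) 1, HasDerivAt F (|c| / (1 - (a + t * c))) t := by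
      intro t ht
      rw [uIcc_of_le zero_le_one] at ht
      have h1 : HasDerivAt (fun t : ℝ => 1 - (a + t * c)) (-c) t := by
        simpa using ((((hasDerivAt_id' t).mul_const c).const_add a).const_sub (1:ℝ))
      have h2 := (h1.log (hppos t ht).ne').const_mul (-(|c| / c))
      have he : -(|c| / c) * (-c / (1 - (a + t * c))) = |c| / (1 - (a + t * c)) := by
        rw [mul_div_assoc', neg_mul_neg, div_mul_cancel₀ _ hc]
      rw [he] at h2
      exact h2
    have hint : IntervalIntegrable (fun t => |c| / (1 - (a + t * c))) volume 0 1 := by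
      apply ContinuousOn.intervalIntegrable
      rw [uIcc_of_le zero_le_one]
      exact continuousOn_const.div
        ((continuous_const.sub (continuous_const.add (continuous_id.mul continuous_const))).continuousOn)
        (fun t ht => (hppos t ht).ne')
    rw [intervalIntegral.integral_eq_sub_of_hasDerivAt hFd hint]
    have hb1 : (0:ℝ) < 1 - b := by linarith [hb.2]
    have ha1 : (0:ℝ) < 1 - a := by linarith [ha.2]
    have hab' : a + 1 * c = b := by rw [hcdef]; ring
    have ha0' : a + 0 * c = a := by ring
    rw [hF]
    simp only [hab', ha0']
    rw [Real.log_div ha1.ne' hb1.ne']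
    rcases lt_or_gt_of_ne hc with hneg | hpos
    · have : |c| = -c := abs_of_neg hneg
      rw [this]
      have hba : b < a := by rw [hcdef] at hneg; linarith
      have hlog : Real.log (1 - a) - Real.log (1 - b) ≤ 0 := by
        have := Real.log_le_log ha1 (by linarith : 1 - a ≤ 1 - b)
        linarith
      rw [abs_of_nonpos hlog]
      field_simp
      ring
    · have : |c| = c := abs_of_pos hpos
      rw [this]
      have hba : a < b := by rw [hcdef] at hpos; linarith
      have hlog : 0 ≤ Real.log (1 - a) - Real.log (1 - b) := by
        have := Real.log_le_log hb1 (by linarith : 1 - b ≤ 1 - a)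
        linarith
      rw [abs_of_nonneg hlog]
      field_simp
      ring


lemma seg_mem_G {n : ℕ} {G : Set (EuclideanSpace ℝ (Fin n))} (hGo : IsOpen G)
    {z₀ z : EuclideanSpace ℝ (Fin n)} (hz₀ : z₀ ∈ G) (hz : z ∈ frontier G)
    (hd : bdist G z₀ = dist z₀ z) {s : ℝ} (hs : s ∈ Ico (0:ℝ) 1) :
    z₀ + s • (z - z₀) ∈ G := by
  have hr : 0 < bdist G z₀ := bdist_pos hGo ⟨z, hz⟩ hz₀
  apply ball_subset_of_bdist hGo hz₀
  rw [mem_ball]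
  have h1 : dist (z₀ + s • (z - z₀)) z₀ = s * ‖z - z₀‖ := by
    rw [dist_eq_norm]
    have h2 : z₀ + s • (z - z₀) - z₀ = s • (z - z₀) := by module
    rw [h2, norm_smul, Real.norm_eq_abs, abs_of_nonneg hs.1]
  have h3 : ‖z - z₀‖ = bdist G z₀ := by rw [hd, dist_eq_norm, norm_sub_rev]
  rw [h1, h3]
  nlinarith [hs.2, hs.1]

theorem stmt_2 (n : ℕ) (G : Set (EuclideanSpace ℝ (Fin n)))
    (hGo : IsOpen G) (hGc : IsConnected G) (hGp : G ≠ Set.univ)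
    (z₀ : EuclideanSpace ℝ (Fin n)) (hz₀ : z₀ ∈ G)
    (z : EuclideanSpace ℝ (Fin n)) (hz : z ∈ frontier G)
    (hd : bdist G z₀ = dist z₀ z)
    (u v : EuclideanSpace ℝ (Fin n))
    (hu : u ∈ segment ℝ z₀ z) (hu' : u ≠ z)
    (hv : v ∈ segment ℝ z₀ z) (hv' : v ≠ z) :
    qhDist G u v = jDist G u v ∧
    jDist G u v = |Real.log (bdist G u / bdist G v)| ∧
    |Real.log (bdist G u / bdist G v)| =
      |Real.log ((bdist G z₀ - dist z₀ u) / (bdist G z₀ - dist z₀ v))| := by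
  have hfr : (frontier G).Nonempty := ⟨z, hz⟩
  have hrpos : 0 < bdist G z₀ := bdist_pos hGo hfr hz₀
  rw [segment_eq_image'] at hu hv
  obtain ⟨a, haI, hau⟩ := hu
  obtain ⟨b, hbI, hbv⟩ := hv
  have hnorm : ‖z - z₀‖ = bdist G z₀ := by rw [hd, dist_eq_norm, norm_sub_rev]
  have ha1 : a < 1 := by
    rcases eq_or_lt_of_le haI.2 with h | h
    · exfalso; apply hu'; rw [← hau, h]
      show z₀ + (1:ℝ) • (z - z₀) = z
      rw [one_smul]; abel
    · exact h
  have hb1 : b < 1 := by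
    rcases eq_or_lt_of_le hbI.2 with h | h
    · exfalso; apply hv'; rw [← hbv, h]
      show z₀ + (1:ℝ) • (z - z₀) = z
      rw [one_smul]; abel
    · exact h
  have ha : a ∈ Ico (0:ℝ) 1 := ⟨haI.1, ha1⟩
  have hb : b ∈ Ico (0:ℝ) 1 := ⟨hbI.1, hb1⟩
  have hdu : bdist G u = (1 - a) * bdist G z₀ := by
    rw [← hau]; exact seg_bdist hz hd haI
  have hdv : bdist G v = (1 - b) * bdist G z₀ := by
    rw [← hbv]; exact seg_bdist hz hd hbI
  have hz0u : dist z₀ u = a * bdist G z₀ := by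
    rw [← hau, dist_eq_norm]
    have h2 : z₀ - (z₀ + a • (z - z₀)) = -(a • (z - z₀)) := by module
    rw [h2, norm_neg, norm_smul, Real.norm_eq_abs, abs_of_nonneg haI.1, hnorm]
  have hz0v : dist z₀ v = b * bdist G z₀ := by
    rw [← hbv, dist_eq_norm]
    have h2 : z₀ - (z₀ + b • (z - z₀)) = -(b • (z - z₀)) := by module
    rw [h2, norm_neg, norm_smul, Real.norm_eq_abs, abs_of_nonneg hbI.1, hnorm]
  have huv : dist u v = |a - b| * bdist G z₀ := by
    rw [← hau, ← hbv, dist_eq_norm]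
    have h2 : (z₀ + a • (z - z₀)) - (z₀ + b • (z - z₀)) = (a - b) • (z - z₀) := by
      module
    rw [h2, norm_smul, Real.norm_eq_abs, hnorm]
  have ha1' : (0:ℝ) < 1 - a := by linarith
  have hb1' : (0:ℝ) < 1 - b := by linarith
  have hratio : bdist G u / bdist G v = (1 - a) / (1 - b) := by
    rw [hdu, hdv, mul_div_mul_right _ _ hrpos.ne']
  have part3 : |Real.log (bdist G u / bdist G v)| =
      |Real.log ((bdist G z₀ - dist z₀ u) / (bdist G z₀ - dist z₀ v))| := by
    rw [hdu, hdv, hz0u, hz0v]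
    ring_nf
  have part2 : jDist G u v = |Real.log (bdist G u / bdist G v)| := by
    rw [hratio]
    unfold jDist
    rw [hdu, hdv, huv]
    rcases le_total a b with hab | hab
    · have hmin : min ((1 - a) * bdist G z₀) ((1 - b) * bdist G z₀)
          = (1 - b) * bdist G z₀ := min_eq_right (by nlinarith)
      rw [hmin, abs_of_nonpos (by linarith : a - b ≤ 0)]
      have he : 1 + -(a - b) * bdist G z₀ / ((1 - b) * bdist G z₀)
          = (1 - a) / (1 - b) := by
        field_simp
        ring
      rw [he, abs_of_nonneg (Real.log_nonneg (by rw [le_div_iff₀ hb1']; linarith))]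
    · have hmin : min ((1 - a) * bdist G z₀) ((1 - b) * bdist G z₀)
          = (1 - a) * bdist G z₀ := min_eq_left (by nlinarith)
      rw [hmin, abs_of_nonneg (by linarith : (0:ℝ) ≤ a - b)]
      have he : 1 + (a - b) * bdist G z₀ / ((1 - a) * bdist G z₀)
          = (1 - b) / (1 - a) := by
        field_simp
        ring
      rw [he]
      have hlog : Real.log ((1 - a) / (1 - b)) ≤ 0 := by
        rw [Real.log_div ha1'.ne' hb1'.ne']
        have := Real.log_le_log ha1' (by linarith : 1 - a ≤ 1 - b)
        linarith
      rw [abs_of_nonpos hlog, Real.log_div ha1'.ne' hb1'.ne',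
        Real.log_div hb1'.ne' ha1'.ne']
      ring
  refine ⟨?_, part2, part3⟩
  -- the straight path
  set σ : ℝ → EuclideanSpace ℝ (Fin n) :=
    fun t => z₀ + (a + t * (b - a)) • (z - z₀) with hσdef
  have hσ0 : σ 0 = u := by
    rw [hσdef, ← hau]
    norm_num
  have hσ1 : σ 1 = v := by
    rw [hσdef, ← hbv]
    show z₀ + (a + 1 * (b - a)) • (z - z₀) = z₀ + b • (z - z₀)
    have : a + 1 * (b - a) = b := by ring
    rw [this]
  have hσG : ∀ t ∈ Icc (0:ℝ) 1, σ t ∈ G := fun t ht =>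
    seg_mem_G hGo hz₀ hz hd ⟨param_nonneg ha.1 hb.1 ht, param_lt_one ha.2 hb.2 ht⟩
  have hσC : ContDiffOn ℝ 1 σ (Icc 0 1) :=
    (contDiff_const.add
      ((contDiff_const.add (contDiff_id.mul contDiff_const)).smul contDiff_const)).contDiffOn
  have hlen : qhLength G σ = |Real.log ((1 - a) / (1 - b))| :=
    qhLength_straight hz hd hrpos ha hb
  haveI : Nonempty {γ : ℝ → EuclideanSpace ℝ (Fin n) // γ 0 = u ∧ γ 1 = v ∧
      (∀ t ∈ Set.Icc (0:ℝ) 1, γ t ∈ G) ∧ ContDiffOn ℝ 1 γ (Set.Icc 0 1)} :=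
    ⟨⟨σ, hσ0, hσ1, hσG, hσC⟩⟩
  have hlb : ∀ p : {γ : ℝ → EuclideanSpace ℝ (Fin n) // γ 0 = u ∧ γ 1 = v ∧
      (∀ t ∈ Set.Icc (0:ℝ) 1, γ t ∈ G) ∧ ContDiffOn ℝ 1 γ (Set.Icc 0 1)},
      jDist G u v ≤ qhLength G p.1 := by
    rintro ⟨γ, h0, h1, hG, hC⟩
    unfold jDist
    rcases le_total (bdist G u) (bdist G v) with h | h
    · rw [min_eq_left h]
      have := qhLength_ge_left hGo hfr hG hC
      rwa [h0, h1] at this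
    · rw [min_eq_right h]
      have := qhLength_ge_right hGo hfr hG hC
      rwa [h0, h1] at this
  have hbdd : BddBelow (Set.range fun p : {γ : ℝ → EuclideanSpace ℝ (Fin n) // γ 0 = u ∧ γ 1 = v ∧
      (∀ t ∈ Set.Icc (0:ℝ) 1, γ t ∈ G) ∧ ContDiffOn ℝ 1 γ (Set.Icc 0 1)} => qhLength G p.1) := by
    refine ⟨jDist G u v, ?_⟩
    rintro x ⟨p, rfl⟩
    exact hlb p
  apply le_antisymm
  · have h1 : qhDist G u v ≤ qhLength G σ := by
      unfold qhDist
      exact ciInf_le hbdd ⟨σ, hσ0, hσ1, hσG, hσC⟩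
    rw [part2, hratio, ← hlen]
    exact h1
  · show jDist G u v ≤ qhDist G u v
    unfold qhDist
    exact le_ciInf hlb
end

section
/- Let G ⊊ ℝⁿ be a domain (nonempty open connected proper subset), let w ∈ G, and let w₀ ∈ ∂G be a boundary point with |w − w₀| = δ_G(w). If s ∈ (0,1) and x, y lie in Bⁿ(w, s·δ_G(w)) ∩ [w, w₀] (the intersection of the open ball of radius s·δ_G(w) centered at w with the segment from w to w₀), then k_G(x,y) ≤ (1+s)·j_G(x,y). -/
open Set Metric

/-- The ball of radius `bdist G w` around `w ∈ G` is contained in `G`. -/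
lemma ball_bdist_subset {n : ℕ} {G : Set (EuclideanSpace ℝ (Fin n))} (hGo : IsOpen G)
    {w : EuclideanSpace ℝ (Fin n)} (hw : w ∈ G) :
    Metric.ball w (bdist G w) ⊆ G := by
  intro z hz
  by_contra hzG
  have hδpos : 0 < bdist G w := lt_of_le_of_lt dist_nonneg hz
  set S := segment ℝ w z with hSdef
  have hwS : w ∈ S := left_mem_segment ℝ w z
  have hzS : z ∈ S := right_mem_segment ℝ w z
  have hSb : S ⊆ Metric.ball w (bdist G w) :=
    (convex_ball w _).segment_subset (Metric.mem_ball_self hδpos) hz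
  have hdisj : Disjoint (frontier G) S := by
    refine Set.disjoint_left.mpr fun p hpF hpS => ?_
    exact (Metric.ball_infDist_subset_compl (hSb hpS) : p ∈ (frontier G)ᶜ) hpF
  haveI : PreconnectedSpace S :=
    Subtype.preconnectedSpace (convex_segment w z).isPreconnected
  have hclopen : IsClopen (Subtype.val ⁻¹' G : Set S) := isClopen_preimage_val hGo hdisj
  rcases isClopen_iff.mp hclopen with h | h
  · have : (⟨w, hwS⟩ : S) ∈ (Subtype.val ⁻¹' G : Set S) := hw
    rw [h] at this; exact this
  · have : (⟨z, hzS⟩ : S) ∈ (Subtype.val ⁻¹' G : Set S) := by rw [h]; trivial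
    exact hzG this

/-- The basic integral computation. -/
lemma integral_aux {a b : ℝ} (hab : a ≤ b) (hb : b < 1) :
    (∫ t in (0:ℝ)..1, (b - a) / (1 - a - t*(b-a))) = Real.log ((1-a)/(1-b)) := by
  have ha : a < 1 := lt_of_le_of_lt hab hb
  have htpos : ∀ t ∈ Icc (0:ℝ) 1, 0 < 1 - a - t*(b-a) := by
    intro t ht
    have h := mul_le_of_le_one_left (sub_nonneg.2 hab) ht.2
    linarith
  have hg : ∀ t : ℝ, HasDerivAt (fun t => 1 - a - t*(b-a)) (-(b-a)) t := by
    intro t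
    simpa using (((hasDerivAt_id t).mul_const (b-a)).const_sub (1 - a))
  have hF : ∀ t ∈ uIcc (0:ℝ) 1,
      HasDerivAt (fun t => -Real.log (1 - a - t*(b-a))) ((b-a)/(1 - a - t*(b-a))) t := by
    intro t ht
    rw [uIcc_of_le zero_le_one] at ht
    have h := ((hg t).log (htpos t ht).ne').neg
    have e : (b-a)/(1 - a - t*(b-a)) = -(-(b-a)/(1 - a - t*(b-a))) := by ring
    rw [e]
    exact h
  have hcont : ContinuousOn (fun t => (b - a) / (1 - a - t*(b-a))) (uIcc (0:ℝ) 1) := by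
    apply ContinuousOn.div continuousOn_const
    · fun_prop
    · intro t ht
      rw [uIcc_of_le zero_le_one] at ht
      exact (htpos t ht).ne'
  rw [intervalIntegral.integral_eq_sub_of_hasDerivAt hF
    (hcont.intervalIntegrable)]
  have h1 : (1:ℝ) - a - 1*(b-a) = 1 - b := by ring
  have h0 : (1:ℝ) - a - 0*(b-a) = 1 - a := by ring
  rw [h1, h0, Real.log_div (by linarith) (by linarith)]
  ring

theorem stmt_4 (n : ℕ) (G : Set (EuclideanSpace ℝ (Fin n)))
    (hGo : IsOpen G) (hGc : IsConnected G) (hGp : G ≠ Set.univ)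
    (w : EuclideanSpace ℝ (Fin n)) (hw : w ∈ G)
    (w₀ : EuclideanSpace ℝ (Fin n)) (hw₀ : w₀ ∈ frontier G)
    (hd : dist w w₀ = bdist G w)
    (s : ℝ) (hs : s ∈ Set.Ioo (0:ℝ) 1)
    (x y : EuclideanSpace ℝ (Fin n))
    (hx : x ∈ Metric.ball w (s * bdist G w) ∩ segment ℝ w w₀)
    (hy : y ∈ Metric.ball w (s * bdist G w) ∩ segment ℝ w w₀) :
    qhDist G x y ≤ (1 + s) * jDist G x y := by
  obtain ⟨hs0, hs1⟩ := hs
  set δ := bdist G w with hδdef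
  set u := w₀ - w with hudef
  have hw₀G : w₀ ∉ G := (hGo.frontier_eq ▸ hw₀).2
  have hwne : w ≠ w₀ := fun h => hw₀G (h ▸ hw)
  have hδu : ‖u‖ = δ := by
    rw [← hd, dist_eq_norm, hudef, norm_sub_rev]
  have hδpos : 0 < δ := by
    rw [← hδu, norm_pos_iff, hudef, sub_ne_zero]
    exact fun h => hwne h.symm
  clear_value δ u
  -- the distance along the segment
  have hdw : ∀ t : ℝ, dist (w + t • u) w = |t| * δ := by
    intro t
    rw [dist_eq_norm, add_sub_cancel_left, norm_smul, Real.norm_eq_abs, hδu]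
  -- the boundary distance along the segment
  have hbd : ∀ t : ℝ, t ∈ Icc (0:ℝ) 1 → bdist G (w + t • u) = (1 - t) * δ := by
    intro t ht
    apply le_antisymm
    · have h1 : bdist G (w + t • u) ≤ dist (w + t • u) w₀ :=
        Metric.infDist_le_dist_of_mem hw₀
      have h2 : dist (w + t • u) w₀ = (1 - t) * δ := by
        rw [dist_eq_norm]
        have he : w + t • u - w₀ = (t - 1) • u := by
          rw [hudef]; module
        rw [he, norm_smul, Real.norm_eq_abs, abs_of_nonpos (by linarith [ht.2]), hδu]
        ring
      linarith
    · have h1 : bdist G w ≤ bdist G (w + t • u) + dist w (w + t • u) :=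
        Metric.infDist_le_infDist_add_dist
      have h2 : dist w (w + t • u) = |t| * δ := by rw [dist_comm]; exact hdw t
      rw [abs_of_nonneg ht.1] at h2
      rw [← hδdef] at h1
      have : (1 - t) * δ = δ - t * δ := by ring
      linarith
  -- representations of x and y
  obtain ⟨hxb, hxs⟩ := hx
  obtain ⟨hyb, hys⟩ := hy
  rw [segment_eq_image'] at hxs hys
  obtain ⟨a, haI, hax⟩ := hxs
  obtain ⟨b, hbI, hby⟩ := hys
  have haxu : w + a • u = x := by rw [hudef]; exact hax
  have hbyu : w + b • u = y := by rw [hudef]; exact hby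
  clear hax hby
  have has : a < s := by
    have h1 : dist x w < s * δ := hxb
    rw [← haxu, hdw a, abs_of_nonneg haI.1] at h1
    exact lt_of_mul_lt_mul_right h1 hδpos.le
  have hbs : b < s := by
    have h1 : dist y w < s * δ := hyb
    rw [← hbyu, hdw b, abs_of_nonneg hbI.1] at h1
    exact lt_of_mul_lt_mul_right h1 hδpos.le
  -- the straight path from x to y
  set γ : ℝ → EuclideanSpace ℝ (Fin n) := fun t => x + t • (y - x) with hγdef
  have hyx : y - x = (b - a) • u := by
    rw [← haxu, ← hbyu, sub_smul]; abel
  have hγeq : ∀ t : ℝ, γ t = w + (a + t*(b-a)) • u := by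
    intro t
    show x + t • (y - x) = w + (a + t*(b-a)) • u
    rw [hyx, ← haxu]
    module
  -- bounds on a + t*(b-a)
  have hc0 : ∀ t ∈ Icc (0:ℝ) 1, 0 ≤ a + t*(b-a) := by
    intro t ht
    nlinarith [mul_nonneg (sub_nonneg.2 ht.2) haI.1, mul_nonneg ht.1 hbI.1]
  have hcs : ∀ t ∈ Icc (0:ℝ) 1, a + t*(b-a) < s := by
    intro t ht
    rcases le_total a b with h | h
    · nlinarith [mul_nonneg (sub_nonneg.2 ht.2) (sub_nonneg.2 h)]
    · nlinarith [mul_nonneg ht.1 (sub_nonneg.2 h)]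
  have hcI : ∀ t ∈ Icc (0:ℝ) 1, a + t*(b-a) ∈ Icc (0:ℝ) 1 :=
    fun t ht => ⟨hc0 t ht, le_of_lt (lt_trans (hcs t ht) hs1)⟩
  -- the path stays in G
  have hγG : ∀ t ∈ Icc (0:ℝ) 1, γ t ∈ G := by
    intro t ht
    apply ball_bdist_subset hGo hw
    rw [mem_ball, hγeq t, hdw, abs_of_nonneg (hc0 t ht), ← hδdef]
    calc (a + t*(b-a)) * δ < 1 * δ :=
          mul_lt_mul_of_pos_right (by linarith [hcs t ht]) hδpos
      _ = δ := one_mul δ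
  -- smoothness and derivative
  have hderiv : ∀ t : ℝ, HasDerivAt γ (y - x) t := by
    intro t
    have h1 : HasDerivAt (fun t : ℝ => t • (y - x)) ((1:ℝ) • (y - x)) t :=
      (hasDerivAt_id t).smul_const (y - x)
    rw [one_smul] at h1
    exact h1.const_add x
  have hγcd : ContDiffOn ℝ 1 γ (Icc 0 1) :=
    (contDiff_const.add (contDiff_id.smul contDiff_const)).contDiffOn
  have hγ0 : γ 0 = x := by simp [hγdef]
  have hγ1 : γ 1 = y := by simp [hγdef]
  -- the quasihyperbolic length of γ
  have hlen : qhLength G γ = ∫ t in (0:ℝ)..1, |b - a| / (1 - a - t*(b-a)) := by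
    unfold qhLength
    apply intervalIntegral.integral_congr
    intro t ht
    rw [uIcc_of_le zero_le_one] at ht
    show ‖deriv γ t‖ / bdist G (γ t) = |b - a| / (1 - a - t*(b-a))
    rw [(hderiv t).deriv, hyx, hγeq t, hbd _ (hcI t ht), norm_smul, Real.norm_eq_abs, hδu]
    rw [mul_div_mul_right _ _ hδpos.ne']
    congr 1
    ring
  -- qhDist is at most the length of γ
  have hqh : qhDist G x y ≤ qhLength G γ := by
    have hbdd : BddBelow (Set.range fun γ' : {γ' : ℝ → EuclideanSpace ℝ (Fin n) //
        γ' 0 = x ∧ γ' 1 = y ∧ (∀ t ∈ Set.Icc (0:ℝ) 1, γ' t ∈ G) ∧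
        ContDiffOn ℝ 1 γ' (Set.Icc 0 1)} => qhLength G γ'.1) := by
      refine ⟨0, ?_⟩
      rintro r ⟨γ', rfl⟩
      exact intervalIntegral.integral_nonneg zero_le_one
        (fun t _ => div_nonneg (norm_nonneg _) Metric.infDist_nonneg)
    exact ciInf_le hbdd ⟨γ, hγ0, hγ1, hγG, hγcd⟩
  -- boundary distances at x and y
  have hbx : bdist G x = (1 - a) * δ := by rw [← haxu]; exact hbd a haI
  have hbY : bdist G y = (1 - b) * δ := by rw [← hbyu]; exact hbd b hbI
  have hdxy : dist x y = |b - a| * δ := by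
    rw [dist_eq_norm, ← neg_sub y x, norm_neg, hyx, norm_smul, Real.norm_eq_abs, hδu]
  -- the length equals jDist
  have hkey : qhLength G γ = jDist G x y := by
    rw [hlen]
    unfold jDist
    rw [hdxy, hbx, hbY]
    rcases le_total a b with h | h
    · rw [abs_of_nonneg (sub_nonneg.2 h), min_eq_right
        (mul_le_mul_of_nonneg_right (by linarith) hδpos.le)]
      rw [integral_aux h (lt_trans hbs hs1)]
      congr 1
      have hb1 : (0:ℝ) < 1 - b := by linarith [lt_trans hbs hs1]
      field_simp
      ring
    · rw [abs_of_nonpos (sub_nonpos.2 h), min_eq_left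
        (mul_le_mul_of_nonneg_right (by linarith) hδpos.le)]
      have heq : ∀ t ∈ uIcc (0:ℝ) 1, -(b - a) / (1 - a - t*(b-a))
          = (fun t' => (a - b) / (1 - b - t'*(a-b))) (1 - t) := by
        intro t _
        show -(b - a) / (1 - a - t*(b-a)) = (a - b) / (1 - b - (1-t)*(a-b))
        congr 1
        · ring
        · ring
      rw [intervalIntegral.integral_congr heq]
      rw [intervalIntegral.integral_comp_sub_left (fun t' => (a - b) / (1 - b - t'*(a-b))) 1]
      norm_num
      rw [integral_aux h (lt_trans has hs1)]
      congr 1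
      have ha1 : (0:ℝ) < 1 - a := by linarith [lt_trans has hs1]
      field_simp
      ring
  -- conclusion
  have hjnn : 0 ≤ jDist G x y := by
    unfold jDist
    apply Real.log_nonneg
    have hmin : 0 < min (bdist G x) (bdist G y) := by
      rw [hbx, hbY]
      exact lt_min (mul_pos (by linarith) hδpos) (mul_pos (by linarith) hδpos)
    have := div_nonneg (dist_nonneg (x := x) (y := y)) hmin.le
    linarith
  calc qhDist G x y ≤ qhLength G γ := hqh
    _ = jDist G x y := hkey
    _ ≤ (1 + s) * jDist G x y := le_mul_of_one_le_left hjnn (by linarith)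
end

section
/- Let n ≥ 2, G = ℝⁿ \ {0}, and ε > 0. Set t = exp((1 + 1/ε)·log 3) = 3^{1+1/ε}. Then for every x ∈ G and every y ∈ G lying either in the open ball Bⁿ(0, |x|/t) or outside the closed ball of radius t·|x| centered at 0, one has k_G(x,y) ≤ (1 + ε)·j_G(x,y). -/
open Set Metric

lemma pi_lt_3log3 : Real.pi < 3 * Real.log 3 := by
  have h1 : Real.exp (1.05 : ℝ) < 3 := by
    have h := Real.add_one_le_exp (-0.05 : ℝ)
    have heq : Real.exp (1.05 : ℝ) * Real.exp (-0.05) = Real.exp 1 := by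
      rw [← Real.exp_add]; norm_num
    have he := Real.exp_one_lt_d9
    nlinarith [Real.exp_pos (1.05:ℝ), Real.exp_pos (-0.05:ℝ)]
  have hlog : (1.05 : ℝ) < Real.log 3 := by
    rw [Real.lt_log_iff_exp_lt (by norm_num)]; exact h1
  nlinarith [Real.pi_lt_d2]

lemma norm_comb {E : Type*} [NormedAddCommGroup E] [InnerProductSpace ℝ E]
    (x b : E) (hxb : inner ℝ x b = (0:ℝ)) (a c : ℝ) :
    ‖a • x + c • b‖^2 = a^2*‖x‖^2 + c^2*‖b‖^2 := by
  rw [norm_add_sq_real]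
  rw [norm_smul, norm_smul, real_inner_smul_left, real_inner_smul_right, hxb]
  simp [mul_pow]

lemma bdist_eq {n : ℕ} (hn : 2 ≤ n) (z : EuclideanSpace ℝ (Fin n)) :
    bdist ({0}ᶜ : Set (EuclideanSpace ℝ (Fin n))) z = ‖z‖ := by
  haveI : Nontrivial (EuclideanSpace ℝ (Fin n)) := by
    refine ⟨⟨EuclideanSpace.single ⟨0, by omega⟩ (1:ℝ), 0, ?_⟩⟩
    intro h
    have := congrArg (fun v : EuclideanSpace ℝ (Fin n) => v ⟨0, by omega⟩) h
    simp [EuclideanSpace.single] at this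
  have hfr : frontier ({0}ᶜ : Set (EuclideanSpace ℝ (Fin n))) = {0} := by
    rw [frontier_compl]
    have : interior ({0} : Set (EuclideanSpace ℝ (Fin n))) = ∅ := by
      have hd : Dense ({(0:EuclideanSpace ℝ (Fin n))}ᶜ : Set (EuclideanSpace ℝ (Fin n))) :=
        dense_compl_singleton 0
      rw [← compl_compl ({(0:EuclideanSpace ℝ (Fin n))} : Set _), interior_compl,
        hd.closure_eq]
      simp
    rw [isClosed_singleton.frontier_eq, this]
    simp
  rw [bdist, hfr, Metric.infDist_singleton, dist_zero_right]

lemma exists_orth {n : ℕ} (hn : 2 ≤ n) (x : EuclideanSpace ℝ (Fin n)) :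
    ∃ b : EuclideanSpace ℝ (Fin n), inner ℝ x b = (0:ℝ) ∧ ‖b‖ = 1 := by
  have hdim : Module.finrank ℝ (EuclideanSpace ℝ (Fin n)) = n := by
    simp [finrank_euclideanSpace]
  set f := (innerSL ℝ x : EuclideanSpace ℝ (Fin n) →L[ℝ] ℝ)
  have hker : 0 < Module.finrank ℝ (LinearMap.ker (f : EuclideanSpace ℝ (Fin n) →ₗ[ℝ] ℝ)) := by
    have h := LinearMap.finrank_range_add_finrank_ker (f : EuclideanSpace ℝ (Fin n) →ₗ[ℝ] ℝ)
    have hr : Module.finrank ℝ (LinearMap.range (f : EuclideanSpace ℝ (Fin n) →ₗ[ℝ] ℝ)) ≤ 1 := by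
      have := Submodule.finrank_le (LinearMap.range (f : EuclideanSpace ℝ (Fin n) →ₗ[ℝ] ℝ))
      simpa [Module.finrank_self] using this
    rw [hdim] at h
    omega
  haveI := Module.nontrivial_of_finrank_pos hker
  obtain ⟨⟨v, hv⟩, hvne⟩ := exists_ne (0 : LinearMap.ker (f : EuclideanSpace ℝ (Fin n) →ₗ[ℝ] ℝ))
  have hv0 : v ≠ 0 := by
    intro h; apply hvne; ext; simp [h]
  refine ⟨‖v‖⁻¹ • v, ?_, ?_⟩
  · rw [real_inner_smul_right]
    have hiv : inner ℝ x v = (0:ℝ) := hv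
    rw [hiv]; ring
  · rw [norm_smul]
    simp
    rw [inv_mul_cancel₀ (norm_ne_zero_iff.mpr hv0)]

set_option maxHeartbeats 1000000 in
theorem stmt_7 (n : ℕ) (hn : 2 ≤ n) (ε : ℝ) (hε : 0 < ε)
    (t : ℝ) (ht : t = Real.exp ((1 + 1 / ε) * Real.log 3))
    (x y : EuclideanSpace ℝ (Fin n)) (hx : x ≠ 0) (hy : y ≠ 0)
    (hmem : y ∈ Metric.ball (0 : EuclideanSpace ℝ (Fin n)) (‖x‖ / t) ∨
            y ∉ Metric.closedBall (0 : EuclideanSpace ℝ (Fin n)) (t * ‖x‖)) :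
    qhDist ({0}ᶜ : Set (EuclideanSpace ℝ (Fin n))) x y ≤
      (1 + ε) * jDist ({0}ᶜ : Set (EuclideanSpace ℝ (Fin n))) x y := by
  have hr : (0:ℝ) < ‖x‖ := norm_pos_iff.mpr hx
  have hs : (0:ℝ) < ‖y‖ := norm_pos_iff.mpr hy
  set r : ℝ := ‖x‖ with hrdef
  set s : ℝ := ‖y‖ with hsdef
  set p : ℝ := (inner ℝ x y : ℝ) / (r * s) with hpdef
  have hp1 : |p| ≤ 1 := by
    rw [hpdef, abs_div]
    rw [div_le_one (by positivity)]
    calc |(inner ℝ x y : ℝ)| ≤ ‖x‖ * ‖y‖ := abs_real_inner_le_norm x y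
    _ = |r * s| := by rw [abs_of_pos (by positivity)]
  have hp1' := abs_le.mp hp1
  have hixy : (inner ℝ x y : ℝ) = p * r * s := by
    rw [hpdef]; field_simp
  set α : ℝ := Real.arccos p with hadef
  have hcos : Real.cos α = p := Real.cos_arccos hp1'.1 hp1'.2
  have hsin : Real.sin α = Real.sqrt (1 - p^2) := by
    rw [hadef]; exact Real.sin_arccos p
  have hα0 : 0 ≤ α := Real.arccos_nonneg p
  have hαπ : α ≤ Real.pi := Real.arccos_le_pi p
  -- construct the orthonormal frame
  set w : EuclideanSpace ℝ (Fin n) := y - (p*s/r) • x with hwdef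
  have hxw : (inner ℝ x w : ℝ) = 0 := by
    rw [hwdef, inner_sub_right, real_inner_smul_right, hixy, real_inner_self_eq_norm_sq]
    field_simp
    ring
  have hw2 : ‖w‖^2 = s^2*(1-p^2) := by
    rw [hwdef, norm_sub_sq_real, real_inner_smul_right, real_inner_comm, hixy, norm_smul]
    rw [mul_pow, Real.norm_eq_abs, sq_abs]
    field_simp
    ring
  obtain ⟨b, hb1, hb2, hby⟩ : ∃ b : EuclideanSpace ℝ (Fin n), (inner ℝ x b : ℝ) = 0 ∧ ‖b‖ = 1 ∧
      y = (p*s/r) • x + (s * Real.sin α) • b := by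
    by_cases hw : w = 0
    · obtain ⟨b, hb1, hb2⟩ := exists_orth hn x
      refine ⟨b, hb1, hb2, ?_⟩
      have hp2 : 1 - p^2 = 0 := by
        have : ‖w‖^2 = 0 := by rw [hw]; simp
        rw [hw2] at this
        have hs2 : s^2 ≠ 0 := by positivity
        exact (mul_eq_zero.mp this).resolve_left hs2
      have hsin0 : Real.sin α = 0 := by rw [hsin, hp2, Real.sqrt_zero]
      rw [hsin0]
      have : y - (p*s/r) • x = 0 := hw
      have hy' : y = (p*s/r) • x := by
        rwa [sub_eq_zero] at this
      rw [← hy']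
      simp
    · refine ⟨‖w‖⁻¹ • w, ?_, ?_, ?_⟩
      · rw [real_inner_smul_right, hxw]; ring
      · rw [norm_smul]
        simp
        rw [inv_mul_cancel₀ (norm_ne_zero_iff.mpr hw)]
      · have hwn : ‖w‖ = s * Real.sin α := by
          rw [hsin]
          have h1p : 0 ≤ 1 - p^2 := by nlinarith [hp1'.1, hp1'.2]
          have : ‖w‖ = Real.sqrt (s^2*(1-p^2)) := by
            rw [← hw2, Real.sqrt_sq (norm_nonneg w)]
          rw [this, Real.sqrt_mul (by positivity), Real.sqrt_sq hs.le]
        rw [smul_smul, ← hwn, mul_inv_cancel₀ (by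
          rw [hwn]
          have : w ≠ 0 := hw
          rw [← hwn]
          exact norm_ne_zero_iff.mpr hw), one_smul]
        rw [hwdef]
        abel
  -- the path
  set L : ℝ := Real.log r - Real.log s with hLdef
  set γ : ℝ → EuclideanSpace ℝ (Fin n) := fun u =>
    (Real.exp (-L*u) * Real.cos (α*u)) • x + (r * (Real.exp (-L*u) * Real.sin (α*u))) • b
    with hγdef
  have hγ0 : γ 0 = x := by simp [hγdef]
  have hexpL : Real.exp (-L) = s / r := by
    rw [hLdef, neg_sub, Real.exp_sub, Real.exp_log hs, Real.exp_log hr]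
  have hγ1 : γ 1 = y := by
    simp only [hγdef, mul_one]
    have c1 : s/r*Real.cos α = p*s/r := by rw [hcos]; ring
    have c2 : r*(s/r*Real.sin α) = s*Real.sin α := by field_simp
    rw [hexpL, c1, c2]
    exact hby.symm
  have hnormγ : ∀ u : ℝ, ‖γ u‖ = r * Real.exp (-L*u) := by
    intro u
    have h2 : ‖γ u‖^2 = (r * Real.exp (-L*u))^2 := by
      simp only [hγdef]
      rw [norm_comb x b hb1]
      rw [hb2]
      linear_combination (r * Real.exp (-L*u))^2 * Real.sin_sq_add_cos_sq (α*u)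
    rw [← Real.sqrt_sq (norm_nonneg (γ u)), h2, Real.sqrt_sq (by positivity)]
  have hne : ∀ u : ℝ, γ u ≠ 0 := by
    intro u h
    have := hnormγ u
    rw [h] at this
    simp at this
    nlinarith [mul_pos hr (Real.exp_pos (-L*u))]
  -- derivative
  have hderiv : ∀ u : ℝ, HasDerivAt γ
      ((Real.exp (-L*u) * -L * Real.cos (α*u) + Real.exp (-L*u) * (-Real.sin (α*u) * α)) • x +
       (r * (Real.exp (-L*u) * -L * Real.sin (α*u) + Real.exp (-L*u) * (Real.cos (α*u) * α))) • b) u := by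
    intro u
    have h1 : HasDerivAt (fun u : ℝ => -L*u) (-L) u := by
      simpa using (hasDerivAt_id u).const_mul (-L)
    have h3 : HasDerivAt (fun u : ℝ => α*u) α u := by
      simpa using (hasDerivAt_id u).const_mul α
    have h2 := h1.exp
    have hf := h2.mul h3.cos
    have hg := (h2.mul h3.sin).const_mul r
    have := (hf.smul_const x).add (hg.smul_const b)
    convert this using 2 <;> rfl
  set Q : ℝ := Real.sqrt (L^2 + α^2) with hQdef
  have hnd : ∀ u : ℝ, ‖deriv γ u‖ = r * Real.exp (-L*u) * Q := by
    intro u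
    rw [(hderiv u).deriv]
    set A : ℝ := Real.exp (-L*u) * -L * Real.cos (α*u) + Real.exp (-L*u) * (-Real.sin (α*u) * α) with hA
    set C : ℝ := r * (Real.exp (-L*u) * -L * Real.sin (α*u) + Real.exp (-L*u) * (Real.cos (α*u) * α)) with hC
    have h2 : ‖A • x + C • b‖^2 = (r * Real.exp (-L*u))^2 * (L^2 + α^2) := by
      rw [norm_comb x b hb1, hb2, hA, hC]
      linear_combination ((r * Real.exp (-L*u))^2 * (L^2 + α^2) - (r * Real.exp (-L*u))^2 * L^2) * Real.sin_sq_add_cos_sq (α*u) + ((r * Real.exp (-L*u))^2 * L^2) * Real.sin_sq_add_cos_sq (α*u)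
    rw [← Real.sqrt_sq (norm_nonneg (A • x + C • b)), h2, hQdef,
      Real.sqrt_mul (by positivity), Real.sqrt_sq (by positivity)]
  -- quasihyperbolic length of γ
  have hlen : qhLength ({0}ᶜ : Set (EuclideanSpace ℝ (Fin n))) γ = Q := by
    rw [qhLength]
    have heq : ∀ u : ℝ, ‖deriv γ u‖ / bdist ({0}ᶜ : Set (EuclideanSpace ℝ (Fin n))) (γ u) = Q := by
      intro u
      rw [hnd u, bdist_eq hn, hnormγ u]
      have : r * Real.exp (-L*u) ≠ 0 := by positivity
      field_simp
    simp only [heq]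
    simp
  -- γ is an admissible path
  have hsmooth : ContDiff ℝ 1 γ := by
    have hc : ContDiff ℝ 1 (fun u : ℝ => Real.exp (-L*u) * Real.cos (α*u)) :=
      ((Real.contDiff_exp.comp ((contDiff_const).mul contDiff_id)).mul
        (Real.contDiff_cos.comp ((contDiff_const).mul contDiff_id)))
    have hs' : ContDiff ℝ 1 (fun u : ℝ => r * (Real.exp (-L*u) * Real.sin (α*u))) :=
      contDiff_const.mul ((Real.contDiff_exp.comp ((contDiff_const).mul contDiff_id)).mul
        (Real.contDiff_sin.comp ((contDiff_const).mul contDiff_id)))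
    exact (hc.smul contDiff_const).add (hs'.smul contDiff_const)
  have hmem' : ∀ u ∈ Set.Icc (0:ℝ) 1, γ u ∈ ({0}ᶜ : Set (EuclideanSpace ℝ (Fin n))) := by
    intro u _
    exact hne u
  -- qhDist ≤ Q
  have hqh : qhDist ({0}ᶜ : Set (EuclideanSpace ℝ (Fin n))) x y ≤ Q := by
    rw [← hlen]
    have hb : BddBelow (Set.range (fun γ' : {γ : ℝ → EuclideanSpace ℝ (Fin n) //
        γ 0 = x ∧ γ 1 = y ∧ (∀ u ∈ Set.Icc (0:ℝ) 1, γ u ∈ ({0}ᶜ : Set (EuclideanSpace ℝ (Fin n)))) ∧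
        ContDiffOn ℝ 1 γ (Set.Icc 0 1)} => qhLength ({0}ᶜ : Set (EuclideanSpace ℝ (Fin n))) γ'.1)) := by
      refine ⟨0, ?_⟩
      rintro _ ⟨⟨γ', _⟩, rfl⟩
      exact intervalIntegral.integral_nonneg (by norm_num)
        (fun u _ => div_nonneg (norm_nonneg _) Metric.infDist_nonneg)
    exact ciInf_le hb ⟨γ, hγ0, hγ1, hmem', hsmooth.contDiffOn⟩
  -- bounds on j
  have hjd : jDist ({0}ᶜ : Set (EuclideanSpace ℝ (Fin n))) x y
      = Real.log (1 + dist x y / min r s) := by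
    rw [jDist, bdist_eq hn, bdist_eq hn]
  obtain ⟨j, hjdef⟩ : ∃ j, jDist ({0}ᶜ : Set (EuclideanSpace ℝ (Fin n))) x y = j := ⟨_, rfl⟩
  rw [hjdef]
  rw [hjdef] at hjd
  have hMj : |L| ≤ j := by
    rw [hjd]
    rcases le_total s r with h | h
    · have hL0 : 0 ≤ L := by
        rw [hLdef]; have := Real.log_le_log hs h; linarith
      rw [abs_of_nonneg hL0, min_eq_right h]
      have hd : r - s ≤ dist x y := by
        rw [dist_eq_norm]
        have := norm_sub_norm_le x y
        linarith
      have h1 : r / s ≤ 1 + dist x y / s := by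
        have he : (1 + dist x y / s) = (s + dist x y)/s := by field_simp
        rw [he]
        gcongr
        linarith
      calc L = Real.log (r/s) := by rw [hLdef, Real.log_div hr.ne' hs.ne']
        _ ≤ Real.log (1 + dist x y / s) := Real.log_le_log (by positivity) h1
    · have hL0 : L ≤ 0 := by
        rw [hLdef]; have := Real.log_le_log hr h; linarith
      rw [abs_of_nonpos hL0, min_eq_left h]
      have hd : s - r ≤ dist x y := by
        rw [dist_eq_norm]
        have := norm_sub_norm_le y x
        rw [norm_sub_rev] at this
        linarith
      have h1 : s / r ≤ 1 + dist x y / r := by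
        have he : (1 + dist x y / r) = (r + dist x y)/r := by field_simp
        rw [he]
        gcongr
        linarith
      calc -L = Real.log (s/r) := by rw [hLdef, Real.log_div hs.ne' hr.ne']; ring
        _ ≤ Real.log (1 + dist x y / r) := Real.log_le_log (by positivity) h1
  set T : ℝ := (1 + 1/ε) * Real.log 3 with hTdef
  have hlog3 : (0:ℝ) < Real.log 3 := Real.log_pos (by norm_num)
  have hT0 : 0 < T := by
    rw [hTdef]; positivity
  have htpos : 0 < t := by rw [ht]; exact Real.exp_pos _
  have hTM : T ≤ |L| := by
    rcases hmem with h | h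
    · rw [Metric.mem_ball, dist_zero_right] at h
      have hst : s * t < r := by
        rw [← hsdef] at h
        calc s * t < (r/t) * t := by
              apply mul_lt_mul_of_pos_right h htpos
          _ = r := by field_simp
      have h1 : t ≤ r / s := by
        rw [le_div_iff₀ hs]; nlinarith
      have h2 : T ≤ L := by
        calc T = Real.log t := by rw [ht, Real.log_exp]
          _ ≤ Real.log (r/s) := Real.log_le_log htpos h1
          _ = L := by rw [hLdef, Real.log_div hr.ne' hs.ne']
      calc T ≤ L := h2
        _ ≤ |L| := le_abs_self L
    · rw [Metric.mem_closedBall, dist_zero_right, not_le] at h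
      have h1 : t ≤ s / r := by
        rw [le_div_iff₀ hr]
        rw [← hsdef] at h
        linarith [mul_comm t r]
      have h2 : T ≤ -L := by
        calc T = Real.log t := by rw [ht, Real.log_exp]
          _ ≤ Real.log (s/r) := Real.log_le_log htpos h1
          _ = -L := by rw [hLdef, Real.log_div hs.ne' hr.ne']; ring
      calc T ≤ -L := h2
        _ ≤ |L| := neg_le_abs L
  -- final numeric inequality
  have hj0 : 0 < j := lt_of_lt_of_le (lt_of_lt_of_le hT0 hTM) hMj
  have hQj : Q ≤ (1+ε) * j := by
    rw [hQdef]
    have hgoal : L^2 + α^2 ≤ ((1+ε)*j)^2 := by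
      have hM2 : L^2 = |L|^2 := (sq_abs L).symm
      have hα2 : α^2 ≤ 9 * (Real.log 3)^2 := by
        nlinarith [pi_lt_3log3, Real.pi_pos]
      have h9 : 9*ε ≤ (2+ε)*(1+ε)^2 := by
        nlinarith [sq_nonneg (2*ε-1), pow_nonneg hε.le 3]
      have hT2 : 9 * (Real.log 3)^2 ≤ (2*ε+ε^2) * T^2 := by
        have hexp : (2*ε+ε^2)*T^2 = ((2+ε)*(1+ε)^2) * ((Real.log 3)^2 / ε) := by
          rw [hTdef]; field_simp; ring
        rw [hexp]
        have h10 : (9:ℝ) ≤ (2+ε)*(1+ε)^2/ε := (le_div_iff₀ hε).mpr (by linarith)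
        calc 9 * (Real.log 3)^2 ≤ ((2+ε)*(1+ε)^2/ε) * (Real.log 3)^2 :=
              mul_le_mul_of_nonneg_right h10 (by positivity)
          _ = (2+ε)*(1+ε)^2 * ((Real.log 3)^2/ε) := by ring
      have hMT : (2*ε+ε^2) * T^2 ≤ (2*ε+ε^2) * |L|^2 := by
        apply mul_le_mul_of_nonneg_left _ (by positivity)
        exact pow_le_pow_left₀ hT0.le hTM 2
      have h5 : (1+ε)^2*|L|^2 ≤ (1+ε)^2*j^2 := by
        apply mul_le_mul_of_nonneg_left _ (by positivity)
        exact pow_le_pow_left₀ (abs_nonneg L) hMj 2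
      calc L^2 + α^2 ≤ |L|^2 + (2*ε+ε^2)*|L|^2 := by linarith
        _ = (1+ε)^2 * |L|^2 := by ring
        _ ≤ (1+ε)^2 * j^2 := h5
        _ = ((1+ε)*j)^2 := by ring
    calc Real.sqrt (L^2 + α^2) ≤ Real.sqrt (((1+ε)*j)^2) := Real.sqrt_le_sqrt hgoal
      _ = (1+ε)*j := Real.sqrt_sq (by positivity)
  linarith [hqh, hQj]
end

section
/- Let Bⁿ be the open unit ball in ℝⁿ (n ≥ 1). Then for all x, y ∈ Bⁿ one has k_{Bⁿ}(x,y) ≥ 2·log(2/(2 − |x−y|)) ≥ |x−y|. Equivalently, the identity map from (Bⁿ, k_{Bⁿ}) to (Bⁿ, |·|) has modulus of continuity ω(t) = 2(1 − e^{−t/2}), i.e., |x−y| ≤ 2(1 − e^{−k_{Bⁿ}(x,y)/2}). -/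
open Set Metric

open MeasureTheory
open scoped RealInnerProductSpace

noncomputable def phi (u : ℝ) : ℝ := if 0 ≤ u then -Real.log (1 - u) else Real.log (1 + u)

lemma phi_zero : phi 0 = 0 := by simp [phi]

lemma log_sandwich {v : ℝ} (hv : |v| < 1) : Real.log (1 + v) ≤ -Real.log (1 - v) := by
  rw [abs_lt] at hv
  rw [← Real.log_inv]
  have h1 : (0:ℝ) < 1 - v := by linarith
  apply Real.log_le_log (by linarith)
  rw [inv_eq_one_div, le_div_iff₀ h1]
  nlinarith [sq_nonneg v]

lemma hasDerivAt_neg_log_one_sub {u : ℝ} (hu : u < 1) :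
    HasDerivAt (fun v : ℝ => -Real.log (1 - v)) (1 - u)⁻¹ u := by
  have hd : HasDerivAt (fun v : ℝ => 1 - v) (-1) u := (hasDerivAt_id u).const_sub 1
  have := (hd.log (by intro hc; linarith)).neg
  exact (this : HasDerivAt (fun v : ℝ => -Real.log (1 - v)) (-(-1 / (1 - u))) u).congr_deriv
    (by ring)

lemma hasDerivAt_log_one_add {u : ℝ} (hu : -1 < u) :
    HasDerivAt (fun v : ℝ => Real.log (1 + v)) (1 + u)⁻¹ u := by
  have hd : HasDerivAt (fun v : ℝ => 1 + v) 1 u := (hasDerivAt_id u).const_add 1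
  have := hd.log (by intro hc; linarith)
  convert this using 1
  field_simp

lemma phi_deriv {u : ℝ} (h : |u| < 1) : HasDerivAt phi (1 - |u|)⁻¹ u := by
  have hu1 : u < 1 := (abs_lt.mp h).2
  have hu2 : -1 < u := (abs_lt.mp h).1
  rcases lt_trichotomy u 0 with hu | hu | hu
  · rw [abs_of_neg hu, sub_neg_eq_add]
    apply (hasDerivAt_log_one_add hu2).congr_of_eventuallyEq
    filter_upwards [Iio_mem_nhds hu] with v hv
    simp [phi, not_le.mpr (mem_Iio.mp hv)]
  · subst hu
    have h₁ := hasDerivAt_neg_log_one_sub (by norm_num : (0:ℝ) < 1)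
    have h₂ := hasDerivAt_log_one_add (by norm_num : (-1:ℝ) < 0)
    norm_num at h₁ h₂
    have hval : ((1:ℝ) - |(0:ℝ)|)⁻¹ = 1 := by norm_num
    rw [hval]
    rw [hasDerivAt_iff_tendsto_slope] at h₁ h₂ ⊢
    have hmin := h₁.min h₂
    have hmax := h₁.max h₂
    rw [min_self] at hmin
    rw [max_self] at hmax
    have hev : ∀ᶠ v in nhdsWithin (0:ℝ) {(0:ℝ)}ᶜ, |v| < 1 := by
      apply eventually_nhdsWithin_of_eventually_nhds
      have : ∀ᶠ v in nhds (0:ℝ), v ∈ Ioo (-1:ℝ) 1 := Ioo_mem_nhds (by norm_num) (by norm_num)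
      filter_upwards [this] with v hv
      exact abs_lt.mpr ⟨hv.1, hv.2⟩
    have s1 : ∀ v : ℝ, slope phi 0 v = v⁻¹ * phi v := by
      intro v; simp [slope, phi_zero]
    have s2 : ∀ v : ℝ, slope (fun v : ℝ => -Real.log (1 - v)) 0 v
        = v⁻¹ * -Real.log (1 - v) := by
      intro v; simp [slope]
    have s3 : ∀ v : ℝ, slope (fun v : ℝ => Real.log (1 + v)) 0 v
        = v⁻¹ * Real.log (1 + v) := by
      intro v; simp [slope]
    have hle : ∀ v : ℝ, |v| < 1 → Real.log (1 + v) ≤ phi v ∧ phi v ≤ -Real.log (1 - v) := by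
      intro v hv
      unfold phi
      split_ifs
      · exact ⟨log_sandwich hv, le_refl _⟩
      · exact ⟨le_refl _, log_sandwich hv⟩
    refine tendsto_of_tendsto_of_tendsto_of_le_of_le' hmin hmax ?_ ?_
    · filter_upwards [hev, self_mem_nhdsWithin] with v hv hv0
      rw [s1, s2, s3]
      rcases lt_or_gt_of_ne (show v ≠ 0 from hv0) with hvn | hvp
      · exact le_trans (min_le_left _ _)
          (mul_le_mul_of_nonpos_left (hle v hv).2 (inv_nonpos.mpr hvn.le))
      · exact le_trans (min_le_right _ _)
          (mul_le_mul_of_nonneg_left (hle v hv).1 (inv_nonneg.mpr hvp.le))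
    · filter_upwards [hev, self_mem_nhdsWithin] with v hv hv0
      rw [s1, s2, s3]
      rcases lt_or_gt_of_ne (show v ≠ 0 from hv0) with hvn | hvp
      · exact le_trans (mul_le_mul_of_nonpos_left (hle v hv).1 (inv_nonpos.mpr hvn.le))
          (le_max_right _ _)
      · exact le_trans (mul_le_mul_of_nonneg_left (hle v hv).2 (inv_nonneg.mpr hvp.le))
          (le_max_left _ _)
  · rw [abs_of_pos hu]
    apply (hasDerivAt_neg_log_one_sub hu1).congr_of_eventuallyEq
    filter_upwards [Ioi_mem_nhds hu] with v hv
    simp [phi, le_of_lt (mem_Ioi.mp hv)]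

lemma phi_lower {α β d : ℝ} (hα : |α| < 1) (hβ : |β| < 1) (hd : β - α = d) (hd0 : 0 ≤ d) :
    2 * Real.log (2 / (2 - d)) ≤ phi β - phi α := by
  have hα1 := abs_lt.mp hα
  have hβ1 := abs_lt.mp hβ
  have hd2 : d < 2 := by linarith
  have h2d : (0:ℝ) < 2 - d := by linarith
  have hlog : 2 * Real.log (2 / (2 - d)) = Real.log ((2 / (2 - d)) ^ 2) := by
    rw [Real.log_pow]; push_cast; ring
  rw [hlog]
  by_cases hA : 0 ≤ α
  · have hB : 0 ≤ β := by linarith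
    have e1 : phi β - phi α = Real.log ((1 - α) / (1 - β)) := by
      simp only [phi, if_pos hA, if_pos hB]
      rw [Real.log_div (by linarith) (by linarith)]
      ring
    rw [e1]
    apply Real.log_le_log (by positivity)
    rw [div_pow, div_le_div_iff₀ (by positivity) (by linarith)]
    nlinarith [sq_nonneg (α + β), sq_nonneg d]
  · push_neg at hA
    by_cases hB : 0 ≤ β
    · have e1 : phi β - phi α = Real.log (((1 - β) * (1 + α))⁻¹) := by
        simp only [phi, if_pos hB, if_neg (not_le.mpr hA)]
        rw [Real.log_inv, Real.log_mul (by linarith) (by linarith)]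
        ring
      rw [e1]
      apply Real.log_le_log (by positivity)
      have hpos : (0:ℝ) < (1 - β) * (1 + α) := mul_pos (by linarith) (by linarith)
      rw [div_pow, div_le_iff₀ (by positivity), inv_mul_eq_div, le_div_iff₀ hpos]
      nlinarith [sq_nonneg (α + β)]
    · push_neg at hB
      have e1 : phi β - phi α = Real.log ((1 + β) / (1 + α)) := by
        simp only [phi, if_neg (not_le.mpr hA), if_neg (not_le.mpr hB)]
        rw [Real.log_div (by linarith) (by linarith)]
      rw [e1]
      apply Real.log_le_log (by positivity)
      rw [div_pow, div_le_div_iff₀ (by positivity) (by linarith)]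
      nlinarith [sq_nonneg (α + β), sq_nonneg d]

lemma bdist_ball {n : ℕ} (hn : 1 ≤ n) {z : EuclideanSpace ℝ (Fin n)} (hz : ‖z‖ < 1) :
    bdist (Metric.ball 0 1) z = 1 - ‖z‖ := by
  have hsph : frontier (Metric.ball (0 : EuclideanSpace ℝ (Fin n)) 1)
      = Metric.sphere 0 1 := frontier_ball 0 one_ne_zero
  unfold bdist
  rw [hsph]
  have i0 : Fin n := ⟨0, hn⟩
  have hunit : ‖(EuclideanSpace.single i0 (1:ℝ) : EuclideanSpace ℝ (Fin n))‖ = 1 := by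
    simp [EuclideanSpace.norm_single]
  have hne : (Metric.sphere (0 : EuclideanSpace ℝ (Fin n)) 1).Nonempty :=
    ⟨EuclideanSpace.single i0 (1:ℝ), by simp [mem_sphere_zero_iff_norm, hunit]⟩
  apply le_antisymm
  · by_cases h0 : z = 0
    · subst h0
      have := infDist_le_dist_of_mem (x := (0 : EuclideanSpace ℝ (Fin n)))
        (show (EuclideanSpace.single i0 (1:ℝ) : EuclideanSpace ℝ (Fin n)) ∈ Metric.sphere 0 1 by
          simp [mem_sphere_zero_iff_norm, hunit])
      rw [dist_eq_norm, zero_sub, norm_neg, hunit] at this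
      simpa using this
    · have hzn : (0:ℝ) < ‖z‖ := norm_pos_iff.mpr h0
      have hw : (‖z‖⁻¹ • z : EuclideanSpace ℝ (Fin n)) ∈ Metric.sphere 0 1 := by
        rw [mem_sphere_zero_iff_norm, norm_smul]
        simp [abs_of_pos (inv_pos.mpr hzn), inv_mul_cancel₀ (ne_of_gt hzn)]
      have hle := infDist_le_dist_of_mem (x := z) hw
      have hdist : dist z (‖z‖⁻¹ • z) = 1 - ‖z‖ := by
        rw [dist_eq_norm]
        have hzz : z - ‖z‖⁻¹ • z = (1 - ‖z‖⁻¹) • z := by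
          rw [sub_smul, one_smul]
        rw [hzz, norm_smul, Real.norm_eq_abs]
        rw [abs_of_nonpos (by
          have : (1:ℝ) ≤ ‖z‖⁻¹ := (one_le_inv_iff₀).mpr ⟨hzn, hz.le⟩
          linarith)]
        field_simp
        ring
      rw [hdist] at hle
      exact hle
  · by_contra hcon
    push_neg at hcon
    rw [infDist_lt_iff hne] at hcon
    obtain ⟨w, hw, hwd⟩ := hcon
    rw [mem_sphere_zero_iff_norm] at hw
    rw [dist_eq_norm] at hwd
    have h1 := norm_sub_norm_le w z
    rw [hw, norm_sub_rev] at h1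
    linarith

lemma path_lower {n : ℕ} (hn : 1 ≤ n) (x y : EuclideanSpace ℝ (Fin n))
    (γ : ℝ → EuclideanSpace ℝ (Fin n)) (h0 : γ 0 = x) (h1 : γ 1 = y)
    (hmem : ∀ t ∈ Set.Icc (0:ℝ) 1, γ t ∈ Metric.ball (0 : EuclideanSpace ℝ (Fin n)) 1)
    (hC : ContDiffOn ℝ 1 γ (Set.Icc 0 1)) :
    2 * Real.log (2 / (2 - dist x y)) ≤ qhLength (Metric.ball 0 1) γ := by
  classical
  set e : EuclideanSpace ℝ (Fin n) := ‖y - x‖⁻¹ • (y - x) with he_def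
  have he : ‖e‖ ≤ 1 := by
    rw [he_def, norm_smul, Real.norm_eq_abs]
    rcases eq_or_ne (‖y - x‖) 0 with h | h
    · simp [h]
    · rw [abs_of_pos (inv_pos.mpr ((norm_nonneg _).lt_of_ne (Ne.symm h)))]
      rw [inv_mul_cancel₀ h]
  have hnorm : ∀ t ∈ Set.Icc (0:ℝ) 1, ‖γ t‖ < 1 := by
    intro t ht
    have := hmem t ht
    rwa [mem_ball_zero_iff] at this
  have habs : ∀ t ∈ Set.Icc (0:ℝ) 1, |⟪e, γ t⟫| < 1 := by
    intro t ht
    calc |⟪e, γ t⟫| ≤ ‖e‖ * ‖γ t‖ := abs_real_inner_le_norm e (γ t)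
    _ ≤ 1 * ‖γ t‖ := by
        apply mul_le_mul_of_nonneg_right he (norm_nonneg _)
    _ < 1 := by rw [one_mul]; exact hnorm t ht
  -- the continuous version of the derivative
  set g : ℝ → EuclideanSpace ℝ (Fin n) := derivWithin γ (Set.Icc 0 1) with hg_def
  have hUD : UniqueDiffOn ℝ (Set.Icc (0:ℝ) 1) := uniqueDiffOn_Icc zero_lt_one
  have hg_cont : ContinuousOn g (Set.Icc 0 1) := hC.continuousOn_derivWithin hUD le_rfl
  have hγ_cont : ContinuousOn γ (Set.Icc 0 1) := hC.continuousOn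
  have hderiv : ∀ t ∈ Set.Ioo (0:ℝ) 1, HasDerivAt γ (g t) t := by
    intro t ht
    have hnb : Set.Icc (0:ℝ) 1 ∈ nhds t := Icc_mem_nhds ht.1 ht.2
    have hda : DifferentiableAt ℝ γ t :=
      ((hC.differentiableOn one_ne_zero) t (Set.Ioo_subset_Icc_self ht)).differentiableAt hnb
    have : g t = deriv γ t := by
      rw [hg_def]
      exact hda.derivWithin (hUD t (Set.Ioo_subset_Icc_self ht))
    rw [this]
    exact hda.hasDerivAt
  set u : ℝ → ℝ := fun t => phi ⟪e, γ t⟫ with hu_def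
  set v : ℝ → ℝ := fun t => (1 - |⟪e, γ t⟫|)⁻¹ * ⟪e, g t⟫ with hv_def
  have hinner_cont : ContinuousOn (fun t => ⟪e, γ t⟫) (Set.Icc (0:ℝ) 1) :=
    (innerSL ℝ e).continuous.comp_continuousOn hγ_cont
  have hu_cont : ContinuousOn u (Set.Icc (0:ℝ) 1) := by
    intro t ht
    have : ContinuousWithinAt (phi ∘ fun s : ℝ => ⟪e, γ s⟫) (Set.Icc 0 1) t :=
      ContinuousAt.comp_continuousWithinAt ((phi_deriv (habs t ht)).continuousAt)
        (hinner_cont t ht)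
    exact this
  have hu_deriv : ∀ t ∈ Set.Ioo (0:ℝ) 1, HasDerivAt u (v t) t := by
    intro t ht
    have h1' : HasDerivAt (fun s => ⟪e, γ s⟫) ⟪e, g t⟫ t :=
      (innerSL ℝ e).hasFDerivAt.comp_hasDerivAt t (hderiv t ht)
    exact (phi_deriv (habs t (Set.Ioo_subset_Icc_self ht))).comp t h1'
  have hv_cont : ContinuousOn v (Set.Icc (0:ℝ) 1) := by
    apply ContinuousOn.mul
    · apply ContinuousOn.inv₀
      · exact (continuousOn_const.sub hinner_cont.abs)
      · intro t ht
        have := habs t ht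
        intro hc
        rw [sub_eq_zero] at hc
        rw [← hc] at this
        exact lt_irrefl _ this
    · exact (innerSL ℝ e).continuous.comp_continuousOn hg_cont
  have huIcc : Set.uIcc (0:ℝ) 1 = Set.Icc 0 1 := Set.uIcc_of_le zero_le_one
  have hv_int : IntervalIntegrable v MeasureTheory.volume 0 1 :=
    (huIcc ▸ hv_cont).intervalIntegrable
  have hFTC : ∫ t in (0:ℝ)..1, v t = u 1 - u 0 :=
    intervalIntegral.integral_eq_sub_of_hasDeriv_right_of_le zero_le_one hu_cont
      (fun t ht => (hu_deriv t ht).hasDerivWithinAt) hv_int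
  -- the continuous integrand
  set f : ℝ → ℝ := fun t => ‖g t‖ / bdist (Metric.ball 0 1) (γ t) with hf_def
  have hbd : ∀ t ∈ Set.Icc (0:ℝ) 1, bdist (Metric.ball 0 1) (γ t) = 1 - ‖γ t‖ :=
    fun t ht => bdist_ball hn (hnorm t ht)
  have hf_cont : ContinuousOn f (Set.Icc (0:ℝ) 1) := by
    apply ContinuousOn.div
    · exact hg_cont.norm
    · exact (continuous_infDist_pt _).comp_continuousOn hγ_cont
    · intro t ht
      rw [hbd t ht]
      have := hnorm t ht
      intro hc
      rw [sub_eq_zero] at hc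
      rw [← hc] at this
      exact lt_irrefl _ this
  have hf_int : IntervalIntegrable f MeasureTheory.volume 0 1 :=
    (huIcc ▸ hf_cont).intervalIntegrable
  have hmono : ∫ t in (0:ℝ)..1, v t ≤ ∫ t in (0:ℝ)..1, f t := by
    apply intervalIntegral.integral_mono_on zero_le_one hv_int hf_int
    intro t ht
    have h1' : (0:ℝ) < 1 - |⟪e, γ t⟫| := by linarith [habs t ht]
    have h2' : (0:ℝ) < 1 - ‖γ t‖ := by linarith [hnorm t ht]
    have hinv : (1 - |⟪e, γ t⟫|)⁻¹ ≤ (1 - ‖γ t‖)⁻¹ := by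
      apply inv_anti₀ h2'
      have : |⟪e, γ t⟫| ≤ ‖γ t‖ := by
        calc |⟪e, γ t⟫| ≤ ‖e‖ * ‖γ t‖ := abs_real_inner_le_norm e (γ t)
        _ ≤ 1 * ‖γ t‖ := mul_le_mul_of_nonneg_right he (norm_nonneg _)
        _ = ‖γ t‖ := one_mul _
      linarith
    have hip : ⟪e, g t⟫ ≤ ‖g t‖ := by
      calc ⟪e, g t⟫ ≤ |⟪e, g t⟫| := le_abs_self _
      _ ≤ ‖e‖ * ‖g t‖ := abs_real_inner_le_norm e (g t)
      _ ≤ 1 * ‖g t‖ := mul_le_mul_of_nonneg_right he (norm_nonneg _)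
      _ = ‖g t‖ := one_mul _
    calc v t = (1 - |⟪e, γ t⟫|)⁻¹ * ⟪e, g t⟫ := rfl
    _ ≤ (1 - ‖γ t‖)⁻¹ * ‖g t‖ := by
        rcases le_or_gt (⟪e, g t⟫) 0 with hneg | hpos
        · calc (1 - |⟪e, γ t⟫|)⁻¹ * ⟪e, g t⟫ ≤ 0 :=
            mul_nonpos_of_nonneg_of_nonpos (inv_nonneg.mpr h1'.le) hneg
          _ ≤ (1 - ‖γ t‖)⁻¹ * ‖g t‖ := mul_nonneg (inv_nonneg.mpr h2'.le) (norm_nonneg _)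
        · exact mul_le_mul hinv hip hpos.le (inv_nonneg.mpr h2'.le)
    _ = f t := by simp only [hf_def]; rw [hbd t ht, div_eq_mul_inv, mul_comm]
  have hqh : qhLength (Metric.ball 0 1) γ = ∫ t in (0:ℝ)..1, f t := by
    unfold qhLength
    apply intervalIntegral.integral_congr_ae
    have hne1 : ∀ᵐ t : ℝ ∂MeasureTheory.volume, t ≠ 1 := by
      refine (MeasureTheory.ae_iff).mpr ?_
      simp only [ne_eq, not_not]
      have : {a : ℝ | a = 1} = {(1:ℝ)} := by ext a; simp
      rw [this]
      exact measure_singleton 1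
    filter_upwards [hne1] with t ht htmem
    rw [Set.uIoc_of_le zero_le_one] at htmem
    have htIoo : t ∈ Set.Ioo (0:ℝ) 1 := ⟨htmem.1, lt_of_le_of_ne htmem.2 ht⟩
    have : deriv γ t = g t := by
      have hnb : Set.Icc (0:ℝ) 1 ∈ nhds t := Icc_mem_nhds htIoo.1 htIoo.2
      have hda : DifferentiableAt ℝ γ t :=
        ((hC.differentiableOn one_ne_zero) t (Set.Ioo_subset_Icc_self htIoo)).differentiableAt hnb
      exact (hda.derivWithin (hUD t (Set.Ioo_subset_Icc_self htIoo))).symm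
    rw [this]
  -- values at endpoints
  have hα : |⟪e, x⟫| < 1 := by
    have := habs 0 (by norm_num)
    rwa [h0] at this
  have hβ : |⟪e, y⟫| < 1 := by
    have := habs 1 (by norm_num)
    rwa [h1] at this
  have hdiff : ⟪e, y⟫ - ⟪e, x⟫ = dist x y := by
    rw [← inner_sub_right, he_def, real_inner_smul_left, real_inner_self_eq_norm_mul_norm,
      dist_eq_norm']
    rcases eq_or_ne (‖y - x‖) 0 with h | h
    · simp [h]
    · field_simp
  have hkey := phi_lower hα hβ hdiff dist_nonneg
  calc 2 * Real.log (2 / (2 - dist x y)) ≤ phi ⟪e, y⟫ - phi ⟪e, x⟫ := hkey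
  _ = u 1 - u 0 := by rw [hu_def]; simp only [h0, h1]
  _ = ∫ t in (0:ℝ)..1, v t := hFTC.symm
  _ ≤ ∫ t in (0:ℝ)..1, f t := hmono
  _ = qhLength (Metric.ball 0 1) γ := hqh.symm

theorem stmt_8 (n : ℕ) (hn : 1 ≤ n) (x y : EuclideanSpace ℝ (Fin n))
    (hx : x ∈ Metric.ball (0 : EuclideanSpace ℝ (Fin n)) 1)
    (hy : y ∈ Metric.ball (0 : EuclideanSpace ℝ (Fin n)) 1) :
    2 * Real.log (2 / (2 - dist x y)) ≤
      qhDist (Metric.ball (0 : EuclideanSpace ℝ (Fin n)) 1) x y ∧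
    dist x y ≤ 2 * Real.log (2 / (2 - dist x y)) ∧
    dist x y ≤ 2 * (1 - Real.exp
      (-(qhDist (Metric.ball (0 : EuclideanSpace ℝ (Fin n)) 1) x y) / 2)) := by
  have hd2 : dist x y < 2 := by
    have h1 := mem_ball_zero_iff.mp hx
    have h2 := mem_ball_zero_iff.mp hy
    calc dist x y = ‖x - y‖ := dist_eq_norm x y
    _ ≤ ‖x‖ + ‖y‖ := norm_sub_le x y
    _ < 2 := by linarith
  have h2d : (0:ℝ) < 2 - dist x y := by linarith
  -- nonemptiness: the straight segment
  haveI hne : Nonempty {γ : ℝ → EuclideanSpace ℝ (Fin n) // γ 0 = x ∧ γ 1 = y ∧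
      (∀ t ∈ Set.Icc (0:ℝ) 1, γ t ∈ Metric.ball (0 : EuclideanSpace ℝ (Fin n)) 1) ∧
      ContDiffOn ℝ 1 γ (Set.Icc 0 1)} := by
    refine ⟨⟨fun t => x + t • (y - x), by simp, ?_, ?_, ?_⟩⟩
    · show x + (1:ℝ) • (y - x) = y
      rw [one_smul]; abel
    · intro t ht
      show x + t • (y - x) ∈ Metric.ball (0 : EuclideanSpace ℝ (Fin n)) 1
      have hrw : x + t • (y - x) = (1 - t) • x + t • y := by
        rw [smul_sub, sub_smul, one_smul]; abel
      rw [hrw]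
      exact convex_ball (0 : EuclideanSpace ℝ (Fin n)) 1 hx hy (by linarith [ht.2])
        ht.1 (by ring)
    · exact (contDiff_const.add (contDiff_id.smul contDiff_const)).contDiffOn
  have part1 : 2 * Real.log (2 / (2 - dist x y)) ≤
      qhDist (Metric.ball (0 : EuclideanSpace ℝ (Fin n)) 1) x y := by
    apply le_ciInf
    rintro ⟨γ, hγ0, hγ1, hγmem, hγC⟩
    exact path_lower hn x y γ hγ0 hγ1 hγmem hγC
  have hlogeq : Real.log (2 / (2 - dist x y)) = -Real.log ((2 - dist x y) / 2) := by
    rw [← Real.log_inv]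
    congr 1
    field_simp
  have part2 : dist x y ≤ 2 * Real.log (2 / (2 - dist x y)) := by
    rw [hlogeq]
    have hle := Real.log_le_sub_one_of_pos (show (0:ℝ) < (2 - dist x y) / 2 by linarith)
    linarith
  refine ⟨part1, part2, ?_⟩
  set k := qhDist (Metric.ball (0 : EuclideanSpace ℝ (Fin n)) 1) x y with hk
  have hexp : Real.exp (-k / 2) ≤ (2 - dist x y) / 2 := by
    have h1 : -k / 2 ≤ -Real.log (2 / (2 - dist x y)) := by linarith [part1]
    rw [hlogeq, neg_neg] at h1
    calc Real.exp (-k / 2) ≤ Real.exp (Real.log ((2 - dist x y) / 2)) := Real.exp_le_exp.mpr h1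
    _ = (2 - dist x y) / 2 := Real.exp_log (by linarith)
  linarith
end

section
/- Let G₁ = {(x,y) ∈ ℝ² : |x| + |y| < 1} (the open unit square in the ℓ¹ norm) and G₂ = {(x,y) ∈ ℝ² : x² + y² < 1} (the open unit disc), so that G₁ ⊂ G₂. Then for all z₁, z₂ ∈ G₁, k_{G₁}(z₁, z₂) ≥ √2 · k_{G₂}(z₁, z₂). -/
open Set Metric

section Aux

abbrev E2' := EuclideanSpace ℝ (Fin 2)
def Sq' : Set E2' := {p : E2' | |p 0| + |p 1| < 1}

lemma sq_open' : IsOpen Sq' := by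
  have : Continuous fun p : E2' => |p 0| + |p 1| := by fun_prop
  exact isOpen_lt this continuous_const

lemma norm_le_l1' (p : E2') : ‖p‖ ≤ |p 0| + |p 1| := by
  rw [EuclideanSpace.norm_eq, Fin.sum_univ_two]
  have h0 : (0:ℝ) ≤ |p 0| + |p 1| := by positivity
  calc Real.sqrt (‖p 0‖^2 + ‖p 1‖^2) ≤ Real.sqrt ((|p 0| + |p 1|)^2) := by
        apply Real.sqrt_le_sqrt
        simp only [Real.norm_eq_abs]
        nlinarith [abs_nonneg (p 0), abs_nonneg (p 1)]
    _ = |p 0| + |p 1| := Real.sqrt_sq h0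

lemma sq_subset_ball' : Sq' ⊆ ball (0:E2') 1 := by
  intro z hz
  rw [mem_ball, dist_zero_right]
  exact lt_of_le_of_lt (norm_le_l1' z) hz

lemma mk_frontier' {z : E2'} (hz : z ∈ Sq') :
    ∃ w ∈ frontier Sq', dist z w = (1 - (|z 0| + |z 1|)) / Real.sqrt 2 := by
  set a := |z 0| + |z 1| with ha
  have ha0 : 0 ≤ a := by positivity
  have ha1 : a < 1 := hz
  set c := (1 - a) / 2 with hc
  have hc0 : 0 < c := by simp only [hc]; linarith
  set sx : ℝ := if z 0 < 0 then -1 else 1 with hsx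
  set sy : ℝ := if z 1 < 0 then -1 else 1 with hsy
  have hsx2 : sx * sx = 1 := by rw [hsx]; split <;> norm_num
  have hsy2 : sy * sy = 1 := by rw [hsy]; split <;> norm_num
  have hsxz : sx * z 0 = |z 0| := by
    rw [hsx]; split <;> rename_i h
    · rw [abs_of_neg h]; ring
    · rw [abs_of_nonneg (not_lt.mp h)]; ring
  have hsyz : sy * z 1 = |z 1| := by
    rw [hsy]; split <;> rename_i h
    · rw [abs_of_neg h]; ring
    · rw [abs_of_nonneg (not_lt.mp h)]; ring
  set v : E2' := (WithLp.equiv 2 (Fin 2 → ℝ)).symm ![sx, sy] with hv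
  have hv0 : v 0 = sx := rfl
  have hv1 : v 1 = sy := rfl
  set w : E2' := z + c • v with hw
  have hw0 : w 0 = z 0 + c * sx := rfl
  have hw1 : w 1 = z 1 + c * sy := rfl
  have habs0 : |w 0| = |z 0| + c := by
    have : w 0 = sx * (|z 0| + c) := by
      rw [hw0, ← hsxz]; linear_combination (-(z 0)) * hsx2
    rw [this, abs_mul]
    have : |sx| = 1 := by rw [hsx]; split <;> norm_num
    rw [this, one_mul, abs_of_nonneg (by positivity)]
  have habs1 : |w 1| = |z 1| + c := by
    have : w 1 = sy * (|z 1| + c) := by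
      rw [hw1, ← hsyz]; linear_combination (-(z 1)) * hsy2
    rw [this, abs_mul]
    have : |sy| = 1 := by rw [hsy]; split <;> norm_num
    rw [this, one_mul, abs_of_nonneg (by positivity)]
  have hwsum : |w 0| + |w 1| = 1 := by rw [habs0, habs1, hc, ha]; ring
  have hwmem : w ∈ frontier Sq' := by
    rw [frontier, sq_open'.interior_eq]
    constructor
    · have htend : Filter.Tendsto (fun θ : ℝ => θ • w) (nhdsWithin 1 (Iio 1)) (nhds w) := by
        have : Filter.Tendsto (fun θ : ℝ => θ • w) (nhds 1) (nhds ((1:ℝ) • w)) :=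
          (continuous_id.smul continuous_const).tendsto 1
        rw [one_smul] at this
        exact this.mono_left nhdsWithin_le_nhds
      apply mem_closure_of_tendsto htend
      filter_upwards [Ioo_mem_nhdsLT_of_mem (by norm_num : (1:ℝ) ∈ Ioc 0 1)] with θ hθ
      have h0 : (θ • w) 0 = θ * w 0 := rfl
      have h1 : (θ • w) 1 = θ * w 1 := rfl
      show |(θ • w) 0| + |(θ • w) 1| < 1
      rw [h0, h1, abs_mul, abs_mul, abs_of_pos hθ.1, ← mul_add, hwsum, mul_one]
      exact hθ.2
    · exact fun hmem => absurd hwsum (ne_of_lt hmem)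
  refine ⟨w, hwmem, ?_⟩
  have : z - w = (-c) • v := by rw [hw]; module
  rw [dist_eq_norm, this, norm_smul]
  have hvn : ‖v‖ = Real.sqrt 2 := by
    rw [EuclideanSpace.norm_eq, Fin.sum_univ_two, hv0, hv1]
    have h1 : ‖sx‖^2 = 1 := by rw [Real.norm_eq_abs, sq_abs, ← hsx2]; ring
    have h2 : ‖sy‖^2 = 1 := by rw [Real.norm_eq_abs, sq_abs, ← hsy2]; ring
    rw [h1, h2]; norm_num
  rw [hvn, Real.norm_eq_abs, abs_neg, abs_of_pos hc0, hc]
  have h2 : Real.sqrt 2 * Real.sqrt 2 = 2 := Real.mul_self_sqrt (by norm_num)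
  rw [eq_div_iff (Real.sqrt_pos.mpr (by norm_num : (0:ℝ) < 2)).ne', mul_assoc, h2]
  ring

lemma sq_bdist_pos' {z : E2'} (hz : z ∈ Sq') : 0 < bdist Sq' z := by
  obtain ⟨w, hw, -⟩ := mk_frontier' hz
  rw [bdist]
  refine (isClosed_frontier.notMem_iff_infDist_pos ⟨w, hw⟩).mp ?_
  rw [frontier, sq_open'.interior_eq]
  exact fun h => h.2 hz

lemma sq_bdist_ub' {z : E2'} (hz : z ∈ Sq') :
    bdist Sq' z ≤ (1 - (|z 0| + |z 1|)) / Real.sqrt 2 := by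
  obtain ⟨w, hw, hd⟩ := mk_frontier' hz
  rw [bdist, ← hd]
  exact infDist_le_dist_of_mem hw

lemma ball_bdist_lb' {z : E2'} (hz : ‖z‖ < 1) : 1 - ‖z‖ ≤ bdist (ball 0 1) z := by
  rw [bdist, frontier_ball (0:E2') (one_ne_zero)]
  have hne : (sphere (0:E2') 1).Nonempty := NormedSpace.sphere_nonempty.mpr zero_le_one
  by_contra h
  push_neg at h
  obtain ⟨y, hy, hdy⟩ := (infDist_lt_iff hne).mp h
  rw [mem_sphere_iff_norm, sub_zero] at hy
  have : dist z y ≥ ‖y‖ - ‖z‖ := by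
    rw [dist_eq_norm]
    linarith [abs_le.mp (abs_norm_sub_norm_le y z), (norm_sub_rev y z ▸ norm_sub_norm_le y z)]
  linarith [hy ▸ this]

lemma bdist_comp' {z : E2'} (hz : z ∈ Sq') :
    Real.sqrt 2 * bdist Sq' z ≤ bdist (ball 0 1) z := by
  have h1 := sq_bdist_ub' hz
  have hzn : ‖z‖ < 1 := lt_of_le_of_lt (norm_le_l1' z) hz
  have h2 := ball_bdist_lb' hzn
  have hs2 : (0:ℝ) < Real.sqrt 2 := Real.sqrt_pos.mpr (by norm_num)
  have : Real.sqrt 2 * bdist Sq' z ≤ 1 - (|z 0| + |z 1|) := by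
    have := mul_le_mul_of_nonneg_left h1 hs2.le
    rwa [mul_div_cancel₀ _ hs2.ne'] at this
  linarith [norm_le_l1' z]

lemma qhLength_nonneg' (G : Set E2') (γ : ℝ → E2') : 0 ≤ qhLength G γ :=
  intervalIntegral.integral_nonneg zero_le_one
    (fun _ _ => div_nonneg (norm_nonneg _) Metric.infDist_nonneg)

lemma key_length' (γ : ℝ → E2') (hmem : ∀ t ∈ Icc (0:ℝ) 1, γ t ∈ Sq')
    (hC : ContDiffOn ℝ 1 γ (Icc 0 1)) :
    Real.sqrt 2 * qhLength (ball 0 1) γ ≤ qhLength Sq' γ := by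
  set g : ℝ → ℝ := fun t => ‖derivWithin γ (Icc (0:ℝ) 1) t‖ with hg
  have hgc : ContinuousOn g (Icc 0 1) :=
    (hC.continuousOn_derivWithin (uniqueDiffOn_Icc one_pos) le_rfl).norm
  have hγc : ContinuousOn γ (Icc 0 1) := hC.continuousOn
  have hSpos : ∀ t ∈ Icc (0:ℝ) 1, 0 < bdist Sq' (γ t) := fun t ht => sq_bdist_pos' (hmem t ht)
  have hcomp : ∀ t ∈ Icc (0:ℝ) 1,
      Real.sqrt 2 * bdist Sq' (γ t) ≤ bdist (ball 0 1) (γ t) :=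
    fun t ht => bdist_comp' (hmem t ht)
  have hs2 : (0:ℝ) < Real.sqrt 2 := Real.sqrt_pos.mpr (by norm_num)
  have hBpos : ∀ t ∈ Icc (0:ℝ) 1, 0 < bdist (ball 0 1) (γ t) := fun t ht =>
    lt_of_lt_of_le (mul_pos hs2 (hSpos t ht)) (hcomp t ht)
  set fS : ℝ → ℝ := fun t => g t / bdist Sq' (γ t) with hfS
  set fB : ℝ → ℝ := fun t => g t / bdist (ball 0 1) (γ t) with hfB
  have hbScont : ContinuousOn (fun t => bdist Sq' (γ t)) (Icc 0 1) :=
    (Metric.continuous_infDist_pt _).comp_continuousOn hγc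
  have hbBcont : ContinuousOn (fun t => bdist (ball (0:E2') 1) (γ t)) (Icc 0 1) :=
    (Metric.continuous_infDist_pt _).comp_continuousOn hγc
  have hfSc : ContinuousOn fS (Icc 0 1) :=
    hgc.div hbScont (fun t ht => (hSpos t ht).ne')
  have hfBc : ContinuousOn fB (Icc 0 1) :=
    hgc.div hbBcont (fun t ht => (hBpos t ht).ne')
  have hIS : IntervalIntegrable fS MeasureTheory.volume 0 1 :=
    (hfSc.mono (by rw [uIcc_of_le zero_le_one])).intervalIntegrable
  have hIB : IntervalIntegrable fB MeasureTheory.volume 0 1 :=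
    (hfBc.mono (by rw [uIcc_of_le zero_le_one])).intervalIntegrable
  have hae : ∀ᵐ t : ℝ, t ∈ ({1} : Set ℝ)ᶜ :=
    MeasureTheory.compl_mem_ae_iff.mpr (MeasureTheory.measure_singleton 1)
  have hcongr : ∀ G : Set E2',
      qhLength G γ = ∫ t in (0:ℝ)..1, g t / bdist G (γ t) := by
    intro G
    apply intervalIntegral.integral_congr_ae
    filter_upwards [hae] with t ht1 ht
    rw [uIoc_of_le zero_le_one] at ht
    have htIoo : t ∈ Ioo (0:ℝ) 1 := ⟨ht.1, lt_of_le_of_ne ht.2 (by simpa using ht1)⟩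
    have : derivWithin γ (Icc (0:ℝ) 1) t = deriv γ t :=
      derivWithin_of_mem_nhds (Icc_mem_nhds htIoo.1 htIoo.2)
    simp only [hg, this]
  rw [hcongr Sq', hcongr (ball 0 1), ← intervalIntegral.integral_const_mul]
  apply intervalIntegral.integral_mono_on zero_le_one (hIB.const_mul _) hIS
  intro t ht
  show Real.sqrt 2 * fB t ≤ fS t
  have hg0 : 0 ≤ g t := norm_nonneg _
  rw [hfB, hfS, mul_div_assoc']
  rw [div_le_div_iff₀ (hBpos t ht) (hSpos t ht)]
  nlinarith [mul_le_mul_of_nonneg_left (hcomp t ht) hg0, (hSpos t ht)]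

end Aux

theorem stmt_12 (z₁ z₂ : EuclideanSpace ℝ (Fin 2))
    (h₁ : z₁ ∈ {p : EuclideanSpace ℝ (Fin 2) | |p 0| + |p 1| < 1})
    (h₂ : z₂ ∈ {p : EuclideanSpace ℝ (Fin 2) | |p 0| + |p 1| < 1}) :
    Real.sqrt 2 * qhDist (Metric.ball (0 : EuclideanSpace ℝ (Fin 2)) 1) z₁ z₂ ≤
      qhDist {p : EuclideanSpace ℝ (Fin 2) | |p 0| + |p 1| < 1} z₁ z₂ := by
  show Real.sqrt 2 * qhDist (ball (0:E2') 1) z₁ z₂ ≤ qhDist Sq' z₁ z₂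
  have hz₁ : z₁ ∈ Sq' := h₁
  have hz₂ : z₂ ∈ Sq' := h₂
  -- the straight segment shows the index type is nonempty
  set γ₀ : ℝ → E2' := fun t => z₁ + t • (z₂ - z₁) with hγ₀
  have hγ₀0 : γ₀ 0 = z₁ := by simp [hγ₀]
  have hγ₀1 : γ₀ 1 = z₂ := by simp [hγ₀]
  have hγ₀mem : ∀ t ∈ Icc (0:ℝ) 1, γ₀ t ∈ Sq' := by
    intro t ht
    have e0 : γ₀ t 0 = (1 - t) * z₁ 0 + t * z₂ 0 := by
      simp only [hγ₀, PiLp.add_apply, PiLp.smul_apply, PiLp.sub_apply, smul_eq_mul]; ring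
    have e1 : γ₀ t 1 = (1 - t) * z₁ 1 + t * z₂ 1 := by
      simp only [hγ₀, PiLp.add_apply, PiLp.smul_apply, PiLp.sub_apply, smul_eq_mul]; ring
    show |γ₀ t 0| + |γ₀ t 1| < 1
    rw [e0, e1]
    have hb0 : |(1 - t) * z₁ 0 + t * z₂ 0| ≤ (1 - t) * |z₁ 0| + t * |z₂ 0| := by
      calc _ ≤ |(1 - t) * z₁ 0| + |t * z₂ 0| := abs_add_le _ _
        _ = (1 - t) * |z₁ 0| + t * |z₂ 0| := by
            rw [abs_mul, abs_mul, abs_of_nonneg (by linarith [ht.2]), abs_of_nonneg ht.1]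
    have hb1 : |(1 - t) * z₁ 1 + t * z₂ 1| ≤ (1 - t) * |z₁ 1| + t * |z₂ 1| := by
      calc _ ≤ |(1 - t) * z₁ 1| + |t * z₂ 1| := abs_add_le _ _
        _ = (1 - t) * |z₁ 1| + t * |z₂ 1| := by
            rw [abs_mul, abs_mul, abs_of_nonneg (by linarith [ht.2]), abs_of_nonneg ht.1]
    have h1' : |z₁ 0| + |z₁ 1| < 1 := hz₁
    have h2' : |z₂ 0| + |z₂ 1| < 1 := hz₂
    rcases eq_or_lt_of_le ht.1 with h | h
    · rw [← h]
      norm_num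
      linarith [h1']
    · have k1 : t * |z₂ 0| + t * |z₂ 1| < t := by nlinarith
      have k2 : (1 - t) * |z₁ 0| + (1 - t) * |z₁ 1| ≤ 1 - t := by nlinarith [ht.2]
      linarith
  have hγ₀C : ContDiffOn ℝ 1 γ₀ (Icc 0 1) :=
    ((contDiff_const.add (contDiff_id.smul contDiff_const)) : ContDiff ℝ 1 γ₀).contDiffOn
  haveI : Nonempty {γ : ℝ → E2' // γ 0 = z₁ ∧ γ 1 = z₂ ∧
      (∀ t ∈ Icc (0:ℝ) 1, γ t ∈ Sq') ∧ ContDiffOn ℝ 1 γ (Icc 0 1)} :=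
    ⟨⟨γ₀, hγ₀0, hγ₀1, hγ₀mem, hγ₀C⟩⟩
  rw [qhDist]
  apply le_ciInf
  intro γ
  obtain ⟨γf, hγ0, hγ1, hγmem, hγC⟩ := γ
  have hBle : qhDist (ball (0:E2') 1) z₁ z₂ ≤ qhLength (ball (0:E2') 1) γf := by
    rw [qhDist]
    have hbdd : BddBelow (Set.range fun γ' : {γ' : ℝ → E2' // γ' 0 = z₁ ∧ γ' 1 = z₂ ∧
        (∀ t ∈ Icc (0:ℝ) 1, γ' t ∈ ball (0:E2') 1) ∧ ContDiffOn ℝ 1 γ' (Icc 0 1)} =>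
        qhLength (ball (0:E2') 1) γ'.1) :=
      ⟨0, by rintro x ⟨γ', rfl⟩; exact qhLength_nonneg' _ _⟩
    exact ciInf_le hbdd
      ⟨γf, hγ0, hγ1, fun t ht => sq_subset_ball' (hγmem t ht), hγC⟩
  calc Real.sqrt 2 * qhDist (ball (0:E2') 1) z₁ z₂
      ≤ Real.sqrt 2 * qhLength (ball (0:E2') 1) γf :=
        mul_le_mul_of_nonneg_left hBle (Real.sqrt_nonneg 2)
    _ ≤ qhLength Sq' γf := key_length' γf hγmem hγC
end

section
/- Let G₁ = {(x,y) ∈ ℝ² : |x| + |y| < 1} and G₂ = {(x,y) ∈ ℝ² : x² + y² < 1}, so that G₁ ⊂ G₂. Then there is no constant c > 1 such that j_{G₁}(z₁, z₂) ≥ c · j_{G₂}(z₁, z₂) for all z₁, z₂ ∈ G₁; that is, for every c > 1 there exist distinct points z₁, z₂ ∈ G₁ with j_{G₁}(z₁, z₂) < c · j_{G₂}(z₁, z₂). -/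
open Set Metric

/-- The point `(a, 0)` in the Euclidean plane. -/
noncomputable def pt2 (a : ℝ) : EuclideanSpace ℝ (Fin 2) := WithLp.toLp 2 ![a, 0]

lemma pt2_zero (a : ℝ) : pt2 a 0 = a := rfl

lemma pt2_one (a : ℝ) : pt2 a 1 = 0 := rfl

lemma coord_dist_le (x y : EuclideanSpace ℝ (Fin 2)) (i : Fin 2) :
    dist (x i) (y i) ≤ dist x y := by
  rw [EuclideanSpace.dist_eq]
  rw [show dist (x i) (y i) = √(dist (x i) (y i)^2) by rw [Real.sqrt_sq dist_nonneg]]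
  apply Real.sqrt_le_sqrt
  exact Finset.single_le_sum (f := fun j => dist (x j) (y j)^2)
    (fun j _ => sq_nonneg _) (Finset.mem_univ i)

lemma dist_pt2 (a b : ℝ) : dist (pt2 a) (pt2 b) = |a - b| := by
  rw [EuclideanSpace.dist_eq, Fin.sum_univ_two]
  simp [pt2, Real.dist_eq, Real.sqrt_sq_eq_abs]

lemma dist_pt2_zero (a : ℝ) : dist (pt2 a) 0 = |a| := by
  rw [EuclideanSpace.dist_eq, Fin.sum_univ_two]
  simp [pt2, Real.dist_eq, Real.sqrt_sq_eq_abs]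

theorem stmt_13 (c : ℝ) (hc : 1 < c) :
    ∃ z₁ z₂ : EuclideanSpace ℝ (Fin 2),
      z₁ ∈ {p : EuclideanSpace ℝ (Fin 2) | |p 0| + |p 1| < 1} ∧
      z₂ ∈ {p : EuclideanSpace ℝ (Fin 2) | |p 0| + |p 1| < 1} ∧
      z₁ ≠ z₂ ∧
      jDist {p : EuclideanSpace ℝ (Fin 2) | |p 0| + |p 1| < 1} z₁ z₂ <
        c * jDist (Metric.ball (0 : EuclideanSpace ℝ (Fin 2)) 1) z₁ z₂ := by
  set G : Set (EuclideanSpace ℝ (Fin 2)) := {p | |p 0| + |p 1| < 1} with hG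
  set M : ℝ := max 1 (Real.exp (Real.log 2 / (c - 1))) with hM
  have hM1 : (1:ℝ) ≤ M := le_max_left _ _
  have hM0 : (0:ℝ) < M := lt_of_lt_of_le one_pos hM1
  have hMp : (0:ℝ) < M + 1 := by linarith
  set t : ℝ := M / (M + 1) with ht
  have ht0 : 0 < t := div_pos hM0 hMp
  have ht1 : t < 1 := (div_lt_one hMp).2 (by linarith)
  set ε : ℝ := 1 - t with hε
  have hε0 : 0 < ε := by linarith
  have htε : t = M * ε := by
    rw [hε, ht]; field_simp; ring
  refine ⟨pt2 t, pt2 (-t), ?_, ?_, ?_, ?_⟩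
  · show |pt2 t 0| + |pt2 t 1| < 1
    rw [pt2_zero, pt2_one, abs_of_pos ht0, abs_zero]; linarith
  · show |pt2 (-t) 0| + |pt2 (-t) 1| < 1
    rw [pt2_zero, pt2_one, abs_of_neg (by linarith : -t < 0), abs_zero]; linarith
  · intro h
    have : pt2 t 0 = pt2 (-t) 0 := by rw [h]
    rw [pt2_zero, pt2_zero] at this
    linarith
  -- main inequality
  have hd : dist (pt2 t) (pt2 (-t)) = 2 * t := by
    rw [dist_pt2]; rw [abs_of_pos (by linarith : (0:ℝ) < t - -t)]; ring
  -- frontier of G is contained in the set where |p 0| + |p 1| = 1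
  have hcont : Continuous (fun p : EuclideanSpace ℝ (Fin 2) => |p 0| + |p 1|) := by
    fun_prop
  have hfr : frontier G ⊆ {p : EuclideanSpace ℝ (Fin 2) | |p 0| + |p 1| = 1} := by
    have h1 : G = (fun p : EuclideanSpace ℝ (Fin 2) => |p 0| + |p 1|) ⁻¹' Iio 1 := rfl
    intro p hp
    have := hcont.frontier_preimage_subset (Iio 1) (h1 ▸ hp)
    rwa [frontier_Iio, mem_preimage, mem_singleton_iff] at this
  -- frontier of G is nonempty
  have hfrne : (frontier G).Nonempty := by
    rw [nonempty_frontier_iff]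
    constructor
    · refine ⟨pt2 0, ?_⟩
      show |pt2 0 0| + |pt2 0 1| < 1
      rw [pt2_zero, pt2_one]; norm_num
    · intro h
      have : pt2 2 ∈ G := h ▸ mem_univ _
      have : |pt2 2 0| + |pt2 2 1| < 1 := this
      rw [pt2_zero, pt2_one] at this
      norm_num at this
  -- lower bound on bdist G
  have hG1 : ∀ a : ℝ, |a| = t → ε / 2 ≤ bdist G (pt2 a) := by
    intro a ha
    by_contra h
    push_neg at h
    rw [bdist] at h
    obtain ⟨y, hy, hdy⟩ := (infDist_lt_iff hfrne).1 h
    have hy1 : |y 0| + |y 1| = 1 := hfr hy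
    rcases le_or_gt (ε / 2) (|y 1|) with h1 | h1
    · have := coord_dist_le (pt2 a) y 1
      rw [pt2_one, Real.dist_eq, zero_sub, abs_neg] at this
      linarith
    · have h0 : 1 - ε / 2 ≤ |y 0| := by linarith
      have := coord_dist_le (pt2 a) y 0
      rw [pt2_zero, Real.dist_eq] at this
      have habs : |y 0| - |a| ≤ |a - y 0| := by
        rw [abs_sub_comm]
        exact le_trans (abs_sub_abs_le_abs_sub _ _) le_rfl
      rw [ha] at habs
      linarith
  -- bdist for the ball equals ε at both points
  have hsph : (pt2 1) ∈ sphere (0 : EuclideanSpace ℝ (Fin 2)) 1 := by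
    rw [mem_sphere, dist_pt2_zero]; norm_num
  have hsph' : (pt2 (-1)) ∈ sphere (0 : EuclideanSpace ℝ (Fin 2)) 1 := by
    rw [mem_sphere, dist_pt2_zero]; norm_num
  have hbl : ∀ a : ℝ, |a| = t → ε ≤ bdist (ball (0 : EuclideanSpace ℝ (Fin 2)) 1) (pt2 a) := by
    intro a ha
    rw [bdist, frontier_ball 0 one_ne_zero]
    by_contra h
    push_neg at h
    obtain ⟨y, hy, hdy⟩ := (infDist_lt_iff ⟨pt2 1, hsph⟩).1 h
    rw [mem_sphere] at hy
    have h1 : dist y 0 ≤ dist y (pt2 a) + dist (pt2 a) 0 := dist_triangle _ _ _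
    rw [hy, dist_pt2_zero, ha, dist_comm y (pt2 a)] at h1
    linarith
  have hbu1 : bdist (ball (0 : EuclideanSpace ℝ (Fin 2)) 1) (pt2 t) ≤ ε := by
    rw [bdist, frontier_ball 0 one_ne_zero]
    refine le_trans (infDist_le_dist_of_mem hsph) ?_
    rw [dist_pt2, abs_of_nonpos (by linarith : t - 1 ≤ 0)]; linarith
  have hbu2 : bdist (ball (0 : EuclideanSpace ℝ (Fin 2)) 1) (pt2 (-t)) ≤ ε := by
    rw [bdist, frontier_ball 0 one_ne_zero]
    refine le_trans (infDist_le_dist_of_mem hsph') ?_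
    rw [dist_pt2, abs_of_nonneg (by linarith : (0:ℝ) ≤ -t - -1)]; linarith
  have habs_t : |t| = t := abs_of_pos ht0
  have habs_t' : |(-t)| = t := by rw [abs_neg]; exact habs_t
  have hmin2 : min (bdist (ball (0 : EuclideanSpace ℝ (Fin 2)) 1) (pt2 t))
      (bdist (ball (0 : EuclideanSpace ℝ (Fin 2)) 1) (pt2 (-t))) = ε :=
    le_antisymm (le_trans (min_le_left _ _) hbu1) (le_min (hbl t habs_t) (hbl (-t) habs_t'))
  -- compute jDist for the ball
  have hj2 : jDist (ball (0 : EuclideanSpace ℝ (Fin 2)) 1) (pt2 t) (pt2 (-t)) =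
      Real.log (1 + 2 * M) := by
    rw [jDist, hmin2, hd, htε]
    congr 1
    field_simp
  -- bound jDist for G
  have hmin1 : ε / 2 ≤ min (bdist G (pt2 t)) (bdist G (pt2 (-t))) :=
    le_min (hG1 t habs_t) (hG1 (-t) habs_t')
  have hj1 : jDist G (pt2 t) (pt2 (-t)) ≤ Real.log (1 + 4 * M) := by
    rw [jDist, hd]
    have hq : 2 * t / min (bdist G (pt2 t)) (bdist G (pt2 (-t))) ≤ 4 * M := by
      have h1 : 2 * t / min (bdist G (pt2 t)) (bdist G (pt2 (-t))) ≤ 2 * t / (ε / 2) := by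
        apply div_le_div_of_nonneg_left (by linarith) (by linarith) hmin1
      have h2 : 2 * t / (ε / 2) = 4 * M := by
        rw [htε]; field_simp; ring
      linarith
    have hminpos : 0 < min (bdist G (pt2 t)) (bdist G (pt2 (-t))) :=
      lt_of_lt_of_le (by linarith) hmin1
    have hge : 0 ≤ 2 * t / min (bdist G (pt2 t)) (bdist G (pt2 (-t))) :=
      div_nonneg (by linarith) (le_of_lt hminpos)
    exact Real.log_le_log (by linarith) (by linarith)
  rw [hj2]
  -- final arithmetic: log(1+4M) < c log(1+2M)
  have hcK : 0 < c - 1 := by linarith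
  have hexp : Real.exp (Real.log 2 / (c - 1)) < 1 + 2 * M :=
    lt_of_le_of_lt (le_max_right _ _) (by linarith)
  have hlogM : Real.log 2 / (c - 1) < Real.log (1 + 2 * M) := by
    have h0 : (0:ℝ) < 1 + 2 * M := by linarith
    rw [← Real.log_exp (Real.log 2 / (c - 1))]
    exact Real.log_lt_log (Real.exp_pos _) hexp
  have hlog2 : Real.log 2 < (c - 1) * Real.log (1 + 2 * M) := by
    rw [div_lt_iff₀ hcK] at hlogM
    linarith
  have hsplit : Real.log (1 + 4 * M) ≤ Real.log 2 + Real.log (1 + 2 * M) := by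
    rw [← Real.log_mul (by norm_num) (by positivity)]
    exact Real.log_le_log (by positivity) (by linarith)
  calc jDist G (pt2 t) (pt2 (-t)) ≤ Real.log (1 + 4 * M) := hj1
    _ ≤ Real.log 2 + Real.log (1 + 2 * M) := hsplit
    _ < Real.log (1 + 2 * M) + (c - 1) * Real.log (1 + 2 * M) := by linarith
    _ = c * Real.log (1 + 2 * M) := by ring
end

section
/- Let 0 < s < 1, let G₁ = {(x,y) ∈ ℝ² : |x|^s + |y|^s < 1} and G₂ = {(x,y) ∈ ℝ² : |x| + |y| < 1}, so that G₁ ⊂ G₂. Then for all z₁, z₂ ∈ G₁, k_{G₁}(z₁, z₂) ≥ 2^{1/s − 1} · k_{G₂}(z₁, z₂). -/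
open Set Metric

set_option maxHeartbeats 1000000

open Set Metric Real

namespace QHAux

noncomputable def pt (a b : ℝ) : EuclideanSpace ℝ (Fin 2) :=
  (WithLp.equiv 2 (Fin 2 → ℝ)).symm ![a, b]

abbrev G1 (s : ℝ) : Set (EuclideanSpace ℝ (Fin 2)) :=
  {p : EuclideanSpace ℝ (Fin 2) | |p 0| ^ s + |p 1| ^ s < 1}
abbrev G2 : Set (EuclideanSpace ℝ (Fin 2)) :=
  {p : EuclideanSpace ℝ (Fin 2) | |p 0| + |p 1| < 1}

lemma key_ineq {s a b : ℝ} (hs0 : 0 < s) (hs1 : s < 1) (hb : 0 ≤ b) (hba : b ≤ a)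
    (h : a ^ s + b ^ s ≤ 1) : a + (2 ^ (1/s) - 1) * b ≤ 1 := by
  set r : ℝ := 1/s with hrdef
  have hr : 1 < r := one_lt_one_div hs0 hs1
  have ha : 0 ≤ a := hb.trans hba
  set B : ℝ := b ^ s with hBdef
  set A : ℝ := a ^ s with hAdef
  have hB0 : 0 ≤ B := Real.rpow_nonneg hb s
  have hA0 : 0 ≤ A := Real.rpow_nonneg ha s
  have hBA : B ≤ A := Real.rpow_le_rpow hb hba hs0.le
  have hBhalf : B ≤ 1/2 := by linarith
  have hsr : s * r = 1 := by rw [hrdef]; field_simp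
  have hbB : B ^ r = b := by
    rw [hBdef, ← Real.rpow_mul hb, hsr, Real.rpow_one]
  have haA : a ≤ (1 - B) ^ r := by
    calc a = A ^ r := by rw [hAdef, ← Real.rpow_mul ha, hsr, Real.rpow_one]
    _ ≤ (1 - B) ^ r := Real.rpow_le_rpow hA0 (by linarith) (by linarith)
  set θ : ℝ := 1 - 2 * B with hθdef
  have hθ0 : 0 ≤ θ := by rw [hθdef]; linarith
  have hθ1 : 0 ≤ 1 - θ := by rw [hθdef]; linarith
  have conv := convexOn_rpow hr.le
  have h1 : (1 - B) ^ r ≤ θ * 1 ^ r + (1 - θ) * (1/2 : ℝ) ^ r := by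
    have := conv.2 (x := 1) (y := 1/2) (by norm_num) (by norm_num) hθ0 hθ1 (by ring)
    simp only [smul_eq_mul] at this
    have he : θ * 1 + (1 - θ) * (1/2 : ℝ) = 1 - B := by rw [hθdef]; ring
    rwa [he] at this
  have h2 : B ^ r ≤ (1 - θ) * (1/2 : ℝ) ^ r := by
    have := conv.2 (x := 0) (y := 1/2) (by norm_num) (by norm_num) hθ0 hθ1 (by ring)
    simp only [smul_eq_mul] at this
    have he : θ * 0 + (1 - θ) * (1/2 : ℝ) = B := by rw [hθdef]; ring
    rw [he] at this
    have h0r : (0:ℝ) ^ r = 0 := Real.zero_rpow (by positivity)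
    rw [h0r] at this; linarith
  have h4 : (0:ℝ) < 2 ^ r := Real.rpow_pos_of_pos (by norm_num) r
  have h3 : (1/2 : ℝ) ^ r = (2 ^ r)⁻¹ := by
    rw [one_div, Real.inv_rpow (by norm_num : (0:ℝ) ≤ 2)]
  have h1r : (1:ℝ) ^ r = 1 := Real.one_rpow r
  have h2r1 : (1:ℝ) ≤ 2 ^ r := Real.one_le_rpow (by norm_num) (by linarith)
  have h5 : (2 ^ r - 1) * b ≤ (2 ^ r - 1) * ((1 - θ) * (2 ^ r)⁻¹) := by
    apply mul_le_mul_of_nonneg_left _ (by linarith)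
    rw [← hbB]; rw [h3] at h2; exact h2
  have h6 : (2 ^ r - 1) * ((1 - θ) * (2 ^ r)⁻¹) = (1 - θ) - (1 - θ) * (2 ^ r)⁻¹ := by
    field_simp
  rw [h1r, h3] at h1
  linarith

lemma continuous_coord (i : Fin 2) : Continuous fun p : EuclideanSpace ℝ (Fin 2) => p i :=
  (EuclideanSpace.proj i).continuous

lemma continuous_rpow_const {s : ℝ} (hs : 0 < s) : Continuous fun x : ℝ => x ^ s :=
  continuous_iff_continuousAt.2 fun x => Real.continuousAt_rpow_const x s (Or.inr hs.le)

lemma isOpen_G1 {s : ℝ} (hs : 0 < s) : IsOpen (G1 s) := by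
  have : Continuous fun p : EuclideanSpace ℝ (Fin 2) => |p 0| ^ s + |p 1| ^ s :=
    (((continuous_rpow_const hs).comp (continuous_coord 0).abs).add
      (((continuous_rpow_const hs).comp (continuous_coord 1).abs)))
  exact isOpen_lt this continuous_const

lemma isOpen_G2 : IsOpen G2 :=
  isOpen_lt ((continuous_coord 0).abs.add (continuous_coord 1).abs) continuous_const

lemma smul_mem_G1 {s : ℝ} (hs : 0 < s) {c : ℝ} (hc0 : 0 ≤ c) (hc1 : c ≤ 1)
    {z : EuclideanSpace ℝ (Fin 2)} (hz : z ∈ G1 s) : c • z ∈ G1 s := by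
  have h0 : |(c • z) 0| = c * |z 0| := by
    simp [abs_mul, abs_of_nonneg hc0]
  have h1 : |(c • z) 1| = c * |z 1| := by
    simp [abs_mul, abs_of_nonneg hc0]
  have hcs : c ^ s ≤ 1 := Real.rpow_le_one hc0 hc1 hs.le
  have hS : (0:ℝ) ≤ |z 0| ^ s + |z 1| ^ s :=
    add_nonneg (Real.rpow_nonneg (abs_nonneg _) s) (Real.rpow_nonneg (abs_nonneg _) s)
  have heq : |(c • z) 0| ^ s + |(c • z) 1| ^ s = c ^ s * (|z 0| ^ s + |z 1| ^ s) := by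
    rw [h0, h1, Real.mul_rpow hc0 (abs_nonneg _), Real.mul_rpow hc0 (abs_nonneg _)]; ring
  show |(c • z) 0| ^ s + |(c • z) 1| ^ s < 1
  calc |(c • z) 0| ^ s + |(c • z) 1| ^ s = c ^ s * (|z 0| ^ s + |z 1| ^ s) := heq
    _ ≤ 1 * (|z 0| ^ s + |z 1| ^ s) := mul_le_mul_of_nonneg_right hcs hS
    _ < 1 := by rw [one_mul]; exact hz

lemma smul_mem_G1' {s : ℝ} (hs : 0 < s) {c : ℝ} (hc0 : 0 ≤ c) (hc1 : c < 1)
    {z : EuclideanSpace ℝ (Fin 2)} (hz : |z 0| ^ s + |z 1| ^ s ≤ 1) : c • z ∈ G1 s := by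
  have h0 : |(c • z) 0| = c * |z 0| := by simp [abs_mul, abs_of_nonneg hc0]
  have h1 : |(c • z) 1| = c * |z 1| := by simp [abs_mul, abs_of_nonneg hc0]
  have hcs : c ^ s < 1 := Real.rpow_lt_one hc0 hc1 hs
  have hcs0 : 0 ≤ c ^ s := Real.rpow_nonneg hc0 s
  have heq : |(c • z) 0| ^ s + |(c • z) 1| ^ s = c ^ s * (|z 0| ^ s + |z 1| ^ s) := by
    rw [h0, h1, Real.mul_rpow hc0 (abs_nonneg _), Real.mul_rpow hc0 (abs_nonneg _)]; ring
  show |(c • z) 0| ^ s + |(c • z) 1| ^ s < 1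
  rw [heq]
  calc c ^ s * (|z 0| ^ s + |z 1| ^ s) ≤ c ^ s * 1 := mul_le_mul_of_nonneg_left hz hcs0
    _ < 1 := by rwa [mul_one]

lemma smul_mem_G2' {c : ℝ} (hc0 : 0 ≤ c) (hc1 : c < 1)
    {z : EuclideanSpace ℝ (Fin 2)} (hz : |z 0| + |z 1| ≤ 1) : c • z ∈ G2 := by
  have h0 : |(c • z) 0| = c * |z 0| := by simp [abs_mul, abs_of_nonneg hc0]
  have h1 : |(c • z) 1| = c * |z 1| := by simp [abs_mul, abs_of_nonneg hc0]
  show |(c • z) 0| + |(c • z) 1| < 1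
  rw [h0, h1]
  nlinarith [abs_nonneg (z 0), abs_nonneg (z 1)]

lemma mem_closure_of_star {G : Set (EuclideanSpace ℝ (Fin 2))} {w : EuclideanSpace ℝ (Fin 2)}
    (h : ∀ t : ℝ, t ∈ Ioo (0:ℝ) 1 → t • w ∈ G) : w ∈ closure G := by
  have htend : Filter.Tendsto (fun t : ℝ => t • w) (nhdsWithin 1 (Iio (1:ℝ))) (nhds w) := by
    have hcont : Filter.Tendsto (fun t : ℝ => t • w) (nhds 1) (nhds ((1:ℝ) • w)) :=
      (continuous_id.smul continuous_const).tendsto 1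
    rw [one_smul] at hcont
    exact hcont.mono_left nhdsWithin_le_nhds
  refine mem_closure_of_tendsto htend ?_
  filter_upwards [Ioo_mem_nhdsLT_of_mem (show (1:ℝ) ∈ Ioc (0:ℝ) 1 by norm_num)] with t ht
    using h t ht

lemma frontier_G1_mem {s : ℝ} (hs : 0 < s) {w : EuclideanSpace ℝ (Fin 2)}
    (hw : |w 0| ^ s + |w 1| ^ s = 1) : w ∈ frontier (G1 s) := by
  rw [(isOpen_G1 hs).frontier_eq]
  constructor
  · exact mem_closure_of_star fun t ht => smul_mem_G1' hs ht.1.le ht.2 hw.le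
  · intro hlt
    simp only [mem_setOf_eq] at hlt; linarith

lemma frontier_G2_mem {w : EuclideanSpace ℝ (Fin 2)}
    (hw : |w 0| + |w 1| = 1) : w ∈ frontier G2 := by
  rw [isOpen_G2.frontier_eq]
  constructor
  · exact mem_closure_of_star fun t ht => smul_mem_G2' ht.1.le ht.2 hw.le
  · intro hlt
    simp only [mem_setOf_eq] at hlt; linarith

lemma frontier_G2_nonempty : (frontier G2).Nonempty :=
  ⟨pt 1 0, frontier_G2_mem (by simp [pt])⟩

lemma frontier_G1_nonempty {s : ℝ} (hs : 0 < s) : (frontier (G1 s)).Nonempty :=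
  ⟨pt 1 0, frontier_G1_mem hs (by simp [pt, Real.zero_rpow hs.ne', Real.one_rpow])⟩

lemma dist_eq_2 (z w : EuclideanSpace ℝ (Fin 2)) :
    dist z w = Real.sqrt ((z 0 - w 0)^2 + (z 1 - w 1)^2) := by
  rw [EuclideanSpace.dist_eq]; simp [Fin.sum_univ_two, Real.dist_eq, sq_abs]

lemma l1_le_sqrt2_l2 (u v : ℝ) : |u| + |v| ≤ Real.sqrt 2 * Real.sqrt (u^2 + v^2) := by
  rw [← Real.sqrt_mul (by norm_num : (0:ℝ) ≤ 2)]
  refine (Real.le_sqrt (by positivity) (by positivity)).2 ?_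
  nlinarith [sq_nonneg (|u| - |v|), sq_abs u, sq_abs v]

lemma bdist2_ge {z : EuclideanSpace ℝ (Fin 2)} (hz : z ∈ G2) :
    (1 - |z 0| - |z 1|) / Real.sqrt 2 ≤ Metric.infDist z (frontier G2) := by
  by_contra hcon
  push_neg at hcon
  obtain ⟨w, hwf, hwd⟩ := (Metric.infDist_lt_iff frontier_G2_nonempty).1 hcon
  have hwG : w ∉ G2 := by
    rw [isOpen_G2.frontier_eq] at hwf; exact hwf.2
  have hw1 : 1 ≤ |w 0| + |w 1| := by
    by_contra hl; push_neg at hl; exact hwG hl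
  have h2 : (0:ℝ) < Real.sqrt 2 := by positivity
  have hl1 : 1 - |z 0| - |z 1| ≤ |z 0 - w 0| + |z 1 - w 1| := by
    have e0 : |w 0| - |z 0| ≤ |z 0 - w 0| := by
      rw [abs_sub_comm]; exact (abs_sub_abs_le_abs_sub _ _)
    have e1 : |w 1| - |z 1| ≤ |z 1 - w 1| := by
      rw [abs_sub_comm]; exact (abs_sub_abs_le_abs_sub _ _)
    linarith
  have hl2 := l1_le_sqrt2_l2 (z 0 - w 0) (z 1 - w 1)
  rw [dist_eq_2] at hwd
  have hchain : 1 - |z 0| - |z 1| ≤ Real.sqrt 2 * Real.sqrt ((z 0 - w 0)^2 + (z 1 - w 1)^2) := by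
    calc 1 - |z 0| - |z 1| ≤ |z 0 - w 0| + |z 1 - w 1| := hl1
      _ ≤ _ := hl2
  have hlt : Real.sqrt ((z 0 - w 0)^2 + (z 1 - w 1)^2) < (1 - |z 0| - |z 1|) / Real.sqrt 2 := hwd
  rw [lt_div_iff₀ h2] at hlt
  nlinarith [Real.sq_sqrt (by norm_num : (0:ℝ) ≤ 2),
    Real.sqrt_nonneg ((z 0 - w 0)^2 + (z 1 - w 1)^2)]

lemma le_rpow_self {s a : ℝ} (ha0 : 0 ≤ a) (ha1 : a ≤ 1) (hs0 : 0 < s) (hs1 : s < 1) :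
    a ≤ a ^ s := by
  rcases eq_or_lt_of_le ha0 with h | h
  · rw [← h, Real.zero_rpow hs0.ne']
  · calc a = a ^ (1:ℝ) := (Real.rpow_one a).symm
      _ ≤ a ^ s := Real.rpow_le_rpow_of_exponent_ge h ha1 hs1.le

lemma abs_le_one_of_mem {s : ℝ} (hs0 : 0 < s) {z : EuclideanSpace ℝ (Fin 2)} (hz : z ∈ G1 s)
    (i : Fin 2) : |z i| ≤ 1 := by
  by_contra hgt
  push_neg at hgt
  have h1 : (1:ℝ) < |z i| ^ s := Real.one_lt_rpow_iff_of_pos (by linarith) |>.2 (Or.inl ⟨hgt, hs0⟩)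
  have h2 : (0:ℝ) ≤ |z 0| ^ s := Real.rpow_nonneg (abs_nonneg _) s
  have h3 : (0:ℝ) ≤ |z 1| ^ s := Real.rpow_nonneg (abs_nonneg _) s
  have hmem := hz
  simp only [G1, mem_setOf_eq] at hmem
  fin_cases i <;> simp_all <;> linarith

lemma G1_subset_G2 {s : ℝ} (hs0 : 0 < s) (hs1 : s < 1) : G1 s ⊆ G2 := by
  intro z hz
  have h0 : |z 0| ≤ |z 0| ^ s := le_rpow_self (abs_nonneg _) (abs_le_one_of_mem hs0 hz 0) hs0 hs1
  have h1 : |z 1| ≤ |z 1| ^ s := le_rpow_self (abs_nonneg _) (abs_le_one_of_mem hs0 hz 1) hs0 hs1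
  have hmem := hz
  simp only [G1, mem_setOf_eq] at hmem ⊢
  show |z 0| + |z 1| < 1
  linarith

lemma bdist_compare {s : ℝ} (hs0 : 0 < s) (hs1 : s < 1) {z : EuclideanSpace ℝ (Fin 2)}
    (hz : z ∈ G1 s) :
    Metric.infDist z (frontier (G1 s)) ≤ 2 ^ (1 - 1/s) * Metric.infDist z (frontier G2) := by
  set a := |z 0| with hadef
  set b := |z 1| with hbdef
  have ha0 : 0 ≤ a := abs_nonneg _
  have hb0 : 0 ≤ b := abs_nonneg _
  have hzs : a ^ s + b ^ s < 1 := hz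
  have hcont : ContinuousOn (fun u : ℝ => (a + u) ^ s + (b + u) ^ s) (Icc 0 1) :=
    (((continuous_rpow_const hs0).comp (continuous_const.add continuous_id)).add
      (((continuous_rpow_const hs0).comp (continuous_const.add continuous_id)))).continuousOn
  have hf1 : (1:ℝ) ≤ (a + 1) ^ s + (b + 1) ^ s := by
    have e1 : (1:ℝ) ≤ (a + 1) ^ s := Real.one_le_rpow (by linarith) hs0.le
    have e2 : (0:ℝ) ≤ (b + 1) ^ s := Real.rpow_nonneg (by linarith) s
    linarith
  obtain ⟨u, huI, hueq⟩ := intermediate_value_Icc zero_le_one hcont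
    ⟨by simpa using hzs.le, by simpa using hf1⟩
  simp only at hueq
  have hu0 : 0 ≤ u := huI.1
  set ε0 : ℝ := if 0 ≤ z 0 then 1 else -1 with hε0
  set ε1 : ℝ := if 0 ≤ z 1 then 1 else -1 with hε1
  set w : EuclideanSpace ℝ (Fin 2) := z + u • pt ε0 ε1 with hwdef
  have hw0 : w 0 = z 0 + u * ε0 := by simp [hwdef, pt]
  have hw1 : w 1 = z 1 + u * ε1 := by simp [hwdef, pt]
  have habs0 : |w 0| = a + u := by
    rw [hw0, hε0, hadef]
    rcases le_or_gt 0 (z 0) with h | h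
    · rw [if_pos h, mul_one, abs_of_nonneg (by linarith), abs_of_nonneg h]
    · rw [if_neg (not_le.2 h), mul_neg_one, abs_of_nonpos (by linarith), abs_of_neg h]; ring
  have habs1 : |w 1| = b + u := by
    rw [hw1, hε1, hbdef]
    rcases le_or_gt 0 (z 1) with h | h
    · rw [if_pos h, mul_one, abs_of_nonneg (by linarith), abs_of_nonneg h]
    · rw [if_neg (not_le.2 h), mul_neg_one, abs_of_nonpos (by linarith), abs_of_neg h]; ring
  have hwfr : w ∈ frontier (G1 s) := by
    apply frontier_G1_mem hs0
    rw [habs0, habs1, hueq]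
  have hdzw : dist z w = Real.sqrt 2 * u := by
    rw [dist_eq_2, hw0, hw1]
    have e0 : (z 0 - (z 0 + u * ε0))^2 = u^2 * ε0^2 := by ring
    have e1 : (z 1 - (z 1 + u * ε1))^2 = u^2 * ε1^2 := by ring
    have hε0sq : ε0^2 = 1 := by rw [hε0]; split <;> norm_num
    have hε1sq : ε1^2 = 1 := by rw [hε1]; split <;> norm_num
    rw [e0, e1, hε0sq, hε1sq]
    rw [show u^2*1 + u^2*1 = 2 * u^2 by ring, Real.sqrt_mul (by norm_num), Real.sqrt_sq hu0]
  set m : ℝ := 2 ^ (1/s) with hmdef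
  have hm2 : (2:ℝ) ≤ m := by
    rw [hmdef]
    calc (2:ℝ) = 2 ^ (1:ℝ) := (Real.rpow_one 2).symm
      _ ≤ 2 ^ (1/s) := Real.rpow_le_rpow_of_exponent_le (by norm_num)
        (le_of_lt (one_lt_one_div hs0 hs1))
  have hm0 : (0:ℝ) < m := by linarith
  have hkey : a + b + m * u ≤ 1 := by
    rcases le_total b a with hba | hab
    · have := key_ineq hs0 hs1 (by linarith : (0:ℝ) ≤ b + u) (by linarith : b + u ≤ a + u)
        (le_of_eq hueq)
      nlinarith [mul_nonneg (by linarith : (0:ℝ) ≤ m - 2) hb0]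
    · have hueq' : (b + u) ^ s + (a + u) ^ s ≤ 1 := by rw [add_comm]; exact le_of_eq hueq
      have := key_ineq hs0 hs1 (by linarith : (0:ℝ) ≤ a + u) (by linarith : a + u ≤ b + u) hueq'
      nlinarith [mul_nonneg (by linarith : (0:ℝ) ≤ m - 2) ha0]
  have hlam : (2:ℝ) ^ (1 - 1/s) = 2 / m := by
    rw [hmdef, Real.rpow_sub (by norm_num : (0:ℝ) < 2), Real.rpow_one]
  have hlam0 : (0:ℝ) < 2 / m := by positivity
  have hup : Metric.infDist z (frontier (G1 s)) ≤ Real.sqrt 2 * u :=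
    hdzw ▸ Metric.infDist_le_dist_of_mem hwfr
  have hlow := bdist2_ge (G1_subset_G2 hs0 hs1 hz)
  have hsq2 : (0:ℝ) < Real.sqrt 2 := by positivity
  have hsq2m : Real.sqrt 2 * Real.sqrt 2 = 2 := Real.mul_self_sqrt (by norm_num)
  have hmid : Real.sqrt 2 * u ≤ (2 / m) * ((1 - a - b) / Real.sqrt 2) := by
    rw [div_mul_div_comm, le_div_iff₀ (by positivity)]
    have hre : Real.sqrt 2 * u * (m * Real.sqrt 2) = 2 * (m * u) := by
      rw [show Real.sqrt 2 * u * (m * Real.sqrt 2) = (Real.sqrt 2 * Real.sqrt 2) * (m * u) by ring,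
        hsq2m]
    rw [hre]
    nlinarith
  calc Metric.infDist z (frontier (G1 s)) ≤ Real.sqrt 2 * u := hup
    _ ≤ (2 / m) * ((1 - a - b) / Real.sqrt 2) := hmid
    _ ≤ (2 / m) * Metric.infDist z (frontier G2) := by
        apply mul_le_mul_of_nonneg_left _ hlam0.le
        exact hlow
    _ = 2 ^ (1 - 1/s) * Metric.infDist z (frontier G2) := by rw [hlam]

lemma bdist_pos {G : Set (EuclideanSpace ℝ (Fin 2))} (hG : IsOpen G)
    (hfr : (frontier G).Nonempty) {x : EuclideanSpace ℝ (Fin 2)} (hx : x ∈ G) :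
    0 < bdist G x := by
  refine (isClosed_frontier.notMem_iff_infDist_pos hfr).1 ?_
  intro hmem
  rw [hG.frontier_eq] at hmem
  exact hmem.2 hx

lemma qhLength_nonneg (G : Set (EuclideanSpace ℝ (Fin 2))) (γ : ℝ → EuclideanSpace ℝ (Fin 2)) :
    0 ≤ qhLength G γ :=
  intervalIntegral.integral_nonneg zero_le_one
    (fun _ _ => div_nonneg (norm_nonneg _) Metric.infDist_nonneg)

lemma contOn_integrand {G : Set (EuclideanSpace ℝ (Fin 2))} (hG : IsOpen G)
    (hfr : (frontier G).Nonempty) {γ : ℝ → EuclideanSpace ℝ (Fin 2)}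
    (hγ : ContDiffOn ℝ 1 γ (Icc 0 1)) (hmem : ∀ t ∈ Icc (0:ℝ) 1, γ t ∈ G) :
    ContinuousOn (fun t => ‖derivWithin γ (Icc 0 1) t‖ / bdist G (γ t)) (Icc 0 1) := by
  refine ContinuousOn.div ?_ ?_ ?_
  · exact (hγ.continuousOn_derivWithin (uniqueDiffOn_Icc zero_lt_one) le_rfl).norm
  · exact (continuous_infDist_pt (frontier G)).comp_continuousOn hγ.continuousOn
  · exact fun t ht => (bdist_pos hG hfr (hmem t ht)).ne'

lemma qhLength_eq {G : Set (EuclideanSpace ℝ (Fin 2))} {γ : ℝ → EuclideanSpace ℝ (Fin 2)} :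
    qhLength G γ = ∫ t in (0:ℝ)..1, ‖derivWithin γ (Icc 0 1) t‖ / bdist G (γ t) := by
  apply intervalIntegral.integral_congr_ae
  have h1 : ({(1:ℝ)}ᶜ : Set ℝ) ∈ MeasureTheory.ae MeasureTheory.volume :=
    MeasureTheory.compl_mem_ae_iff.2 Real.volume_singleton
  filter_upwards [h1] with x hx hxI
  rw [Set.uIoc_of_le zero_le_one] at hxI
  have hx1 : x ≠ 1 := hx
  have hxo : x ∈ Ioo (0:ℝ) 1 := ⟨hxI.1, lt_of_le_of_ne hxI.2 hx1⟩
  rw [derivWithin_of_mem_nhds (Icc_mem_nhds hxo.1 hxo.2)]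

lemma qhLength_compare {s : ℝ} (hs0 : 0 < s) (hs1 : s < 1)
    {γ : ℝ → EuclideanSpace ℝ (Fin 2)} (hsm : ContDiffOn ℝ 1 γ (Icc 0 1))
    (hmem : ∀ t ∈ Icc (0:ℝ) 1, γ t ∈ G1 s) :
    2 ^ (1/s - 1) * qhLength G2 γ ≤ qhLength (G1 s) γ := by
  have hmem2 : ∀ t ∈ Icc (0:ℝ) 1, γ t ∈ G2 := fun t ht => G1_subset_G2 hs0 hs1 (hmem t ht)
  have hcl : (2:ℝ) ^ (1/s - 1) * 2 ^ (1 - 1/s) = 1 := by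
    rw [← Real.rpow_add (by norm_num : (0:ℝ) < 2)]
    rw [show 1/s - 1 + (1 - 1/s) = 0 by ring, Real.rpow_zero]
  have hc0 : (0:ℝ) ≤ 2 ^ (1/s - 1) := (Real.rpow_pos_of_pos (by norm_num) _).le
  have cont1 := contOn_integrand (isOpen_G1 hs0) (frontier_G1_nonempty hs0) hsm hmem
  have cont2 := contOn_integrand isOpen_G2 frontier_G2_nonempty hsm hmem2
  rw [qhLength_eq (G := G2), qhLength_eq (G := G1 s), ← intervalIntegral.integral_const_mul]
  refine intervalIntegral.integral_mono_on zero_le_one ?_ ?_ ?_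
  · exact (continuousOn_const.mul cont2).intervalIntegrable_of_Icc zero_le_one
  · exact cont1.intervalIntegrable_of_Icc zero_le_one
  · intro t ht
    have hδ1 : 0 < bdist (G1 s) (γ t) :=
      bdist_pos (isOpen_G1 hs0) (frontier_G1_nonempty hs0) (hmem t ht)
    have hδ2 : 0 < bdist G2 (γ t) := bdist_pos isOpen_G2 frontier_G2_nonempty (hmem2 t ht)
    have hcomp : bdist (G1 s) (γ t) ≤ 2 ^ (1 - 1/s) * bdist G2 (γ t) :=
      bdist_compare hs0 hs1 (hmem t ht)
    have hfrac : 2 ^ (1/s - 1) / bdist G2 (γ t) ≤ 1 / bdist (G1 s) (γ t) := by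
      rw [div_le_div_iff₀ hδ2 hδ1, one_mul]
      calc 2 ^ (1/s - 1) * bdist (G1 s) (γ t)
          ≤ 2 ^ (1/s - 1) * (2 ^ (1 - 1/s) * bdist G2 (γ t)) :=
            mul_le_mul_of_nonneg_left hcomp hc0
        _ = (2 ^ (1/s - 1) * 2 ^ (1 - 1/s)) * bdist G2 (γ t) := by ring
        _ = bdist G2 (γ t) := by rw [hcl, one_mul]
    set v := ‖derivWithin γ (Icc 0 1) t‖ with hv
    have hv0 : 0 ≤ v := norm_nonneg _
    calc 2 ^ (1/s - 1) * (v / bdist G2 (γ t)) = v * (2 ^ (1/s - 1) / bdist G2 (γ t)) := by ring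
      _ ≤ v * (1 / bdist (G1 s) (γ t)) := mul_le_mul_of_nonneg_left hfrac hv0
      _ = v / bdist (G1 s) (γ t) := by ring

lemma path_nonempty {s : ℝ} (hs0 : 0 < s) {z₁ z₂ : EuclideanSpace ℝ (Fin 2)}
    (h₁ : z₁ ∈ G1 s) (h₂ : z₂ ∈ G1 s) :
    Nonempty {γ : ℝ → EuclideanSpace ℝ (Fin 2) // γ 0 = z₁ ∧ γ 1 = z₂ ∧
      (∀ t ∈ Set.Icc (0:ℝ) 1, γ t ∈ G1 s) ∧ ContDiffOn ℝ 1 γ (Set.Icc 0 1)} := by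
  refine ⟨⟨fun t : ℝ => Real.smoothTransition (1 - 2*t) • z₁ +
      Real.smoothTransition (2*t - 1) • z₂, ?_, ?_, ?_, ?_⟩⟩
  · simp only; norm_num
  · simp only; norm_num
  · intro t _
    simp only
    rcases le_total t (1/2) with h | h
    · rw [Real.smoothTransition.zero_of_nonpos (show 2*t - 1 ≤ 0 by linarith), zero_smul, add_zero]
      exact smul_mem_G1 hs0 (Real.smoothTransition.nonneg _) (Real.smoothTransition.le_one _) h₁
    · rw [Real.smoothTransition.zero_of_nonpos (show 1 - 2*t ≤ 0 by linarith), zero_smul, zero_add]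
      exact smul_mem_G1 hs0 (Real.smoothTransition.nonneg _) (Real.smoothTransition.le_one _) h₂
  · apply ContDiff.contDiffOn
    refine ContDiff.add (ContDiff.smul (f := fun t => Real.smoothTransition (1 - 2*t)) (g := fun _ => z₁) ?_ contDiff_const)
      (ContDiff.smul (f := fun t => Real.smoothTransition (2*t - 1)) (g := fun _ => z₂) ?_ contDiff_const)
    · exact (Real.smoothTransition.contDiff (n := 1)).comp
        (contDiff_const.sub (contDiff_const.mul contDiff_id))
    · exact (Real.smoothTransition.contDiff (n := 1)).comp
        ((contDiff_const.mul contDiff_id).sub contDiff_const)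

end QHAux

theorem stmt_14 (s : ℝ) (hs0 : 0 < s) (hs1 : s < 1)
    (z₁ z₂ : EuclideanSpace ℝ (Fin 2))
    (h₁ : z₁ ∈ {p : EuclideanSpace ℝ (Fin 2) | |p 0| ^ s + |p 1| ^ s < 1})
    (h₂ : z₂ ∈ {p : EuclideanSpace ℝ (Fin 2) | |p 0| ^ s + |p 1| ^ s < 1}) :
    (2 : ℝ) ^ (1 / s - 1) *
        qhDist {p : EuclideanSpace ℝ (Fin 2) | |p 0| + |p 1| < 1} z₁ z₂ ≤
      qhDist {p : EuclideanSpace ℝ (Fin 2) | |p 0| ^ s + |p 1| ^ s < 1} z₁ z₂ := by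
  classical
  have h₁' : z₁ ∈ QHAux.G1 s := h₁
  have h₂' : z₂ ∈ QHAux.G1 s := h₂
  haveI hne := QHAux.path_nonempty hs0 h₁' h₂'
  have hc0 : (0:ℝ) ≤ 2 ^ (1 / s - 1) := (Real.rpow_pos_of_pos (by norm_num) _).le
  have hbdd : BddBelow (Set.range fun γ : {γ : ℝ → EuclideanSpace ℝ (Fin 2) // γ 0 = z₁ ∧
      γ 1 = z₂ ∧ (∀ t ∈ Set.Icc (0:ℝ) 1, γ t ∈ QHAux.G2) ∧ ContDiffOn ℝ 1 γ (Set.Icc 0 1)} =>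
      qhLength QHAux.G2 γ.1) := by
    refine ⟨0, ?_⟩
    rintro x ⟨γ', rfl⟩
    exact QHAux.qhLength_nonneg _ _
  show (2 : ℝ) ^ (1 / s - 1) * qhDist QHAux.G2 z₁ z₂ ≤ qhDist (QHAux.G1 s) z₁ z₂
  unfold qhDist
  refine le_ciInf fun γp => ?_
  obtain ⟨γ, hγ0, hγ1, hγmem, hγsm⟩ := γp
  have hγmem2 : ∀ t ∈ Set.Icc (0:ℝ) 1, γ t ∈ QHAux.G2 :=
    fun t ht => QHAux.G1_subset_G2 hs0 hs1 (hγmem t ht)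
  have hA : (⨅ γ' : {γ' : ℝ → EuclideanSpace ℝ (Fin 2) // γ' 0 = z₁ ∧ γ' 1 = z₂ ∧
      (∀ t ∈ Set.Icc (0:ℝ) 1, γ' t ∈ QHAux.G2) ∧ ContDiffOn ℝ 1 γ' (Set.Icc 0 1)},
      qhLength QHAux.G2 γ'.1) ≤ qhLength QHAux.G2 γ :=
    ciInf_le hbdd ⟨γ, hγ0, hγ1, hγmem2, hγsm⟩
  calc (2 : ℝ) ^ (1 / s - 1) * ⨅ γ' : {γ' : ℝ → EuclideanSpace ℝ (Fin 2) // γ' 0 = z₁ ∧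
        γ' 1 = z₂ ∧ (∀ t ∈ Set.Icc (0:ℝ) 1, γ' t ∈ QHAux.G2) ∧
        ContDiffOn ℝ 1 γ' (Set.Icc 0 1)}, qhLength QHAux.G2 γ'.1
      ≤ (2 : ℝ) ^ (1 / s - 1) * qhLength QHAux.G2 γ := mul_le_mul_of_nonneg_left hA hc0
    _ ≤ qhLength (QHAux.G1 s) γ := QHAux.qhLength_compare hs0 hs1 hγsm hγmem
end

section
/- Let G₂ ⊊ ℝⁿ be a domain and let G₁ ⊂ G₂ be a bounded subdomain (nonempty, open, connected, containing at least two points). Set c = 1 + 2·dist(G₁, ∂G₂)/diam(G₁). Then for all x, y ∈ G₁, j_{G₁}(x,y) ≥ c · j_{G₂}(x,y). -/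
open Set Metric

/-- The distance between two sets: the infimum of distances between their points. -/
noncomputable def setDist {n : ℕ} (A B : Set (EuclideanSpace ℝ (Fin n))) : ℝ :=
  sInf (Set.image2 dist A B)

lemma log_le_half {w : ℝ} (hw : 1 ≤ w) : Real.log w ≤ (w - w⁻¹)/2 := by
  have key : MonotoneOn (fun w : ℝ => (w - w⁻¹)/2 - Real.log w) (Set.Ici 1) := by
    apply monotoneOn_of_deriv_nonneg (convex_Ici 1)
    · apply ContinuousOn.sub
      · apply ContinuousOn.div_const
        exact continuousOn_id.sub (continuousOn_id.inv₀ (fun x hx => by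
          simp only [mem_Ici] at hx; simp only [id]; linarith))
      · exact Real.continuousOn_log.mono (fun x hx => by
          simp only [mem_Ici] at hx; simp; linarith)
    · intro w hw
      rw [interior_Ici] at hw
      have hw0 : w ≠ 0 := by simp only [mem_Ioi] at hw; positivity
      apply DifferentiableAt.differentiableWithinAt
      fun_prop (disch := assumption)
    · intro w hw
      rw [interior_Ici, mem_Ioi] at hw
      have hw0 : (0:ℝ) < w := by linarith
      have h1 : HasDerivAt (fun w : ℝ => (w - w⁻¹)/2 - Real.log w)
          ((1 - -(w^2)⁻¹)/2 - w⁻¹) w := by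
        exact (((hasDerivAt_id w).sub (hasDerivAt_inv hw0.ne')).div_const 2).sub
          (Real.hasDerivAt_log hw0.ne')
      rw [h1.deriv, sub_nonneg]
      have h2 : (0:ℝ) < w^2 := by positivity
      rw [inv_le_iff_one_le_mul₀ hw0, ← sub_nonneg]
      have : ((1 - -(w ^ 2)⁻¹) / 2) * w - 1 = (w-1)^2 / (2*w) := by
        field_simp; ring
      rw [this]
      positivity
  have h0 := key (self_mem_Ici (a := (1:ℝ))) hw hw
  simp [Real.log_one] at h0
  linarith

lemma H_anti {t : ℝ} (ht : 0 < t) :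
    AntitoneOn (fun s : ℝ => (2*s+t) * (Real.log (s+t) - Real.log s)) (Set.Ioi 0) := by
  apply antitoneOn_of_deriv_nonpos (convex_Ioi 0)
  · apply ContinuousOn.mul
    · fun_prop
    · apply ContinuousOn.sub
      · exact Real.continuousOn_log.comp (by fun_prop) (fun s hs => by
          simp only [mem_Ioi] at hs; simp; intro h; linarith)
      · exact Real.continuousOn_log.mono (fun s hs => by
          simp only [mem_Ioi] at hs; simp; linarith)
  · rw [interior_Ioi]
    intro s hs
    rw [mem_Ioi] at hs
    apply DifferentiableAt.differentiableWithinAt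
    apply DifferentiableAt.mul
    · fun_prop
    · apply DifferentiableAt.sub
      · exact (Real.differentiableAt_log (by linarith)).comp s (by fun_prop)
      · exact Real.differentiableAt_log hs.ne'
  · rw [interior_Ioi]
    intro s hs
    rw [mem_Ioi] at hs
    have hst : (0:ℝ) < s + t := by linarith
    have h1 : HasDerivAt (fun s : ℝ => (2*s+t) * (Real.log (s+t) - Real.log s))
        (2 * (Real.log (s+t) - Real.log s) + (2*s+t) * ((s+t)⁻¹*1 - s⁻¹)) s := by
      have ha : HasDerivAt (fun s : ℝ => 2*s+t) 2 s := by
        simpa using ((hasDerivAt_id s).const_mul 2).add_const t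
      have hb : HasDerivAt (fun s : ℝ => Real.log (s+t) - Real.log s) ((s+t)⁻¹*1 - s⁻¹) s := by
        exact HasDerivAt.sub (HasDerivAt.comp s (Real.hasDerivAt_log hst.ne')
          (by simpa using (hasDerivAt_id s).add_const t)) (Real.hasDerivAt_log hs.ne')
      exact ha.mul hb
    rw [h1.deriv]
    -- need: 2*(log(s+t) - log s) ≤ (2s+t)*(s⁻¹ - (s+t)⁻¹)
    have hlog : Real.log (s+t) - Real.log s = Real.log ((s+t)/s) := by
      rw [Real.log_div hst.ne' hs.ne']
    have hw : 1 ≤ (s+t)/s := by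
      rw [le_div_iff₀ hs]; linarith
    have hkey := log_le_half hw
    have hrw : (((s+t)/s) - ((s+t)/s)⁻¹)/2 = (2*s+t)*t/(2*(s*(s+t))) := by
      rw [inv_div]
      field_simp
      ring
    rw [hrw] at hkey
    rw [hlog]
    have hineq : 2 * ((2*s+t)*t/(2*(s*(s+t)))) + (2*s+t) * ((s+t)⁻¹*1 - s⁻¹) = 0 := by
      field_simp
      ring
    nlinarith [hkey]

lemma key_ineq {m t d D M : ℝ} (hm : 0 < m) (ht : 0 < t) (hd : 0 ≤ d)
    (hM : m + d ≤ M) (hD : 2*m + t ≤ D) :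
    (1 + 2*d/D) * Real.log (1 + t/M) ≤ Real.log (1 + t/m) := by
  have hmd : (0:ℝ) < m + d := by linarith
  have hM0 : (0:ℝ) < M := lt_of_lt_of_le hmd hM
  have hD0 : (0:ℝ) < D := by linarith
  have hmt : (0:ℝ) < 2*m + t := by linarith
  have hlog : ∀ s : ℝ, 0 < s → Real.log (1 + t/s) = Real.log (s+t) - Real.log s := by
    intro s hs
    rw [← Real.log_div (by linarith) hs.ne']
    congr 1
    field_simp
  have l1 : Real.log (1 + t/M) ≤ Real.log (1 + t/(m+d)) := by
    apply Real.log_le_log (by positivity)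
    gcongr
  have l2 : 0 ≤ Real.log (1 + t/(m+d)) := Real.log_nonneg (by
    have : 0 ≤ t/(m+d) := by positivity
    linarith)
  have l3 : 1 + 2*d/D ≤ (2*(m+d)+t)/(2*m+t) := by
    have : 2*d/D ≤ 2*d/(2*m+t) := by gcongr
    have heq : (2*(m+d)+t)/(2*m+t) = 1 + 2*d/(2*m+t) := by field_simp; ring
    rw [heq]
    linarith
  have hc0 : 0 ≤ 1 + 2*d/D := by positivity
  calc (1 + 2*d/D) * Real.log (1 + t/M)
      ≤ (1 + 2*d/D) * Real.log (1 + t/(m+d)) := by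
        exact mul_le_mul_of_nonneg_left l1 hc0
    _ ≤ ((2*(m+d)+t)/(2*m+t)) * Real.log (1 + t/(m+d)) := by
        exact mul_le_mul_of_nonneg_right l3 l2
    _ ≤ Real.log (1 + t/m) := by
        rw [hlog _ hmd, hlog _ hm, div_mul_eq_mul_div, div_le_iff₀ hmt]
        have := H_anti ht (mem_Ioi.mpr hm) (mem_Ioi.mpr hmd) (by linarith : m ≤ m + d)
        simp only at this
        calc (2*(m+d)+t) * (Real.log (m+d+t) - Real.log (m+d))
            ≤ (2*m+t) * (Real.log (m+t) - Real.log m) := this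
          _ = (Real.log (m+t) - Real.log m) * (2*m+t) := by ring

lemma cross {n : ℕ} {G : Set (EuclideanSpace ℝ (Fin n))} (hGo : IsOpen G)
    {z w : EuclideanSpace ℝ (Fin n)} (hz : z ∈ G) (hw : w ∉ G) :
    ∃ u ∈ segment ℝ z w, u ∈ frontier G := by
  by_contra h
  push_neg at h
  have hconn : IsPreconnected (segment ℝ z w) := (convex_segment z w).isPreconnected
  have hsub : segment ℝ z w ⊆ interior G ∪ (closure G)ᶜ := by
    intro u hu
    rcases Classical.em (u ∈ closure G) with hc | hc
    · left
      have : u ∉ frontier G := h u hu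
      rw [frontier, Set.mem_diff] at this
      push_neg at this
      exact this hc
    · right; exact hc
  have h1 : (segment ℝ z w ∩ interior G).Nonempty :=
    ⟨z, left_mem_segment ℝ z w, by rwa [hGo.interior_eq]⟩
  have h2 : (segment ℝ z w ∩ (closure G)ᶜ).Nonempty := by
    refine ⟨w, right_mem_segment ℝ z w, fun hc => ?_⟩
    have : w ∉ frontier G := h w (right_mem_segment ℝ z w)
    rw [frontier, Set.mem_diff] at this
    push_neg at this
    exact hw (hGo.interior_eq ▸ this hc)
  obtain ⟨u, -, hui, huc⟩ := hconn (interior G) (closure G)ᶜ isOpen_interior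
    isClosed_closure.isOpen_compl hsub h1 h2
  exact huc (subset_closure (interior_subset hui))

lemma ball_subset_of_infDist {n : ℕ} {G : Set (EuclideanSpace ℝ (Fin n))} (hGo : IsOpen G)
    {z : EuclideanSpace ℝ (Fin n)} (hz : z ∈ G) :
    Metric.ball z (Metric.infDist z (frontier G)) ⊆ G := by
  intro p hp
  by_contra hpG
  obtain ⟨u, hu_seg, hu_fr⟩ := cross hGo hz hpG
  have h1 : dist z u + dist u p = dist z p := dist_add_dist_of_mem_segment hu_seg
  have h2 : Metric.infDist z (frontier G) ≤ dist z u := Metric.infDist_le_dist_of_mem hu_fr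
  rw [Metric.mem_ball, dist_comm] at hp
  nlinarith [dist_nonneg (x := u) (y := p)]

lemma diam_ge {n : ℕ} {G : Set (EuclideanSpace ℝ (Fin n))} (hGo : IsOpen G)
    (hGb : Bornology.IsBounded G) {x y : EuclideanSpace ℝ (Fin n)}
    (hx : x ∈ G) (hy : y ∈ G) (hxy : x ≠ y)
    (hbx : 0 < Metric.infDist x (frontier G)) (hby : 0 < Metric.infDist y (frontier G)) :
    dist x y + Metric.infDist x (frontier G) + Metric.infDist y (frontier G)
      ≤ Metric.diam G := by
  set bx := Metric.infDist x (frontier G)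
  set by' := Metric.infDist y (frontier G)
  have ht : (0:ℝ) < dist x y := dist_pos.mpr hxy
  apply le_of_forall_pos_le_add
  intro ε hε
  set ε' : ℝ := min (ε/2) (min bx by') with hε'def
  have hε'pos : 0 < ε' := by
    apply lt_min (by linarith) (lt_min hbx hby)
  have hε'x : ε' ≤ bx := le_trans (min_le_right _ _) (min_le_left _ _)
  have hε'y : ε' ≤ by' := le_trans (min_le_right _ _) (min_le_right _ _)
  have hε'ε : ε' ≤ ε/2 := min_le_left _ _
  set t : ℝ := dist x y
  set v : EuclideanSpace ℝ (Fin n) := (‖x - y‖)⁻¹ • (x - y) with hvdef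
  have hnorm : ‖x - y‖ = t := (dist_eq_norm x y).symm
  have hn0 : ‖x - y‖ ≠ 0 := by rw [hnorm]; exact ht.ne'
  have hv : ‖v‖ = 1 := by
    rw [hvdef, norm_smul, norm_inv, norm_norm, inv_mul_cancel₀ hn0]
  have hxy_v : x - y = t • v := by
    rw [hvdef, smul_smul, ← hnorm, mul_inv_cancel₀ hn0, one_smul]
  set a : ℝ := bx - ε'
  set b : ℝ := by' - ε'
  have ha : 0 ≤ a := by simp only [a]; linarith
  have hb : 0 ≤ b := by simp only [b]; linarith
  set x' : EuclideanSpace ℝ (Fin n) := x + a • v with hx'def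
  set y' : EuclideanSpace ℝ (Fin n) := y - b • v with hy'def
  have hx'G : x' ∈ G := by
    apply ball_subset_of_infDist hGo hx
    rw [Metric.mem_ball, dist_eq_norm, hx'def]
    have : x + a • v - x = a • v := by abel
    rw [this, norm_smul, hv, mul_one, Real.norm_eq_abs, abs_of_nonneg ha]
    simp only [a]; linarith
  have hy'G : y' ∈ G := by
    apply ball_subset_of_infDist hGo hy
    rw [Metric.mem_ball, dist_eq_norm, hy'def]
    have : y - b • v - y = (-b) • v := by
      rw [neg_smul]; abel
    rw [this, norm_smul, hv, mul_one, Real.norm_eq_abs, abs_neg, abs_of_nonneg hb]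
    simp only [b]; linarith
  have hdist : dist x' y' = t + a + b := by
    rw [dist_eq_norm, hx'def, hy'def]
    have : x + a • v - (y - b • v) = (x - y) + (a + b) • v := by
      rw [add_smul]; abel
    rw [this, hxy_v, ← add_smul, norm_smul, hv, mul_one, Real.norm_eq_abs,
      abs_of_nonneg (by linarith)]
    ring
  have hdiam : dist x' y' ≤ Metric.diam G := Metric.dist_le_diam_of_mem hGb hx'G hy'G
  rw [hdist] at hdiam
  simp only [a, b] at hdiam
  linarith

theorem stmt_15 (n : ℕ) (G₁ G₂ : Set (EuclideanSpace ℝ (Fin n)))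
    (hG₂o : IsOpen G₂) (hG₂c : IsConnected G₂) (hG₂p : G₂ ≠ Set.univ)
    (hsub : G₁ ⊆ G₂) (hG₁o : IsOpen G₁) (hG₁c : IsConnected G₁)
    (hG₁b : Bornology.IsBounded G₁) (hG₁nt : G₁.Nontrivial)
    (x y : EuclideanSpace ℝ (Fin n)) (hx : x ∈ G₁) (hy : y ∈ G₁) :
    (1 + 2 * setDist G₁ (frontier G₂) / Metric.diam G₁) * jDist G₂ x y ≤
      jDist G₁ x y := by
  obtain ⟨p, hp, q, hq, hpq⟩ := hG₁nt
  haveI : Nontrivial (EuclideanSpace ℝ (Fin n)) := nontrivial_of_ne p q hpq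
  by_cases hxy : x = y
  · simp [jDist, hxy, mul_zero]
  -- boundary nonemptiness
  have hG₁u : G₁ ≠ Set.univ := fun h =>
    NormedSpace.unbounded_univ ℝ (EuclideanSpace ℝ (Fin n)) (h ▸ hG₁b)
  have hF₁ : (frontier G₁).Nonempty := nonempty_frontier_iff.mpr ⟨⟨p, hp⟩, hG₁u⟩
  have hF₂ : (frontier G₂).Nonempty := nonempty_frontier_iff.mpr ⟨hG₂c.nonempty, hG₂p⟩
  -- positivity of bdist on G₁
  have hbpos : ∀ z ∈ G₁, 0 < bdist G₁ z := by
    intro z hz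
    rw [bdist, ← (isClosed_frontier).notMem_iff_infDist_pos hF₁]
    intro hzf
    rw [hG₁o.frontier_eq, Set.mem_diff] at hzf
    exact hzf.2 hz
  set d : ℝ := setDist G₁ (frontier G₂) with hddef
  have hd0 : 0 ≤ d := by
    rw [hddef, setDist]
    apply Real.sInf_nonneg
    rintro r ⟨u, hu, w, hw, rfl⟩
    exact dist_nonneg
  have hdle : ∀ u ∈ G₁, ∀ w ∈ frontier G₂, d ≤ dist u w := by
    intro u hu w hw
    rw [hddef, setDist]
    apply csInf_le
    · exact ⟨0, by rintro r ⟨u', _, w', _, rfl⟩; exact dist_nonneg⟩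
    · exact Set.mem_image2_of_mem hu hw
  -- comparison of boundary distances
  have hbd : ∀ z ∈ G₁, bdist G₁ z + d ≤ bdist G₂ z := by
    intro z hz
    by_contra hlt
    push_neg at hlt
    rw [bdist] at hlt
    obtain ⟨w, hwF, hwd⟩ := (Metric.infDist_lt_iff hF₂).mp hlt
    have hwG : w ∉ G₁ := by
      intro h
      rw [hG₂o.frontier_eq, Set.mem_diff] at hwF
      exact hwF.2 (hsub h)
    obtain ⟨u, huseg, hufr⟩ := cross hG₁o hz hwG
    have h1 : dist z u + dist u w = dist z w := dist_add_dist_of_mem_segment huseg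
    have h2 : bdist G₁ z ≤ dist z u := Metric.infDist_le_dist_of_mem hufr
    have h3 : d ≤ dist u w := by
      apply le_of_forall_pos_le_add
      intro ε hε
      obtain ⟨u', hu', hd'⟩ := Metric.mem_closure_iff.mp hufr.1 ε hε
      calc d ≤ dist u' w := hdle u' hu' w hwF
        _ ≤ dist u' u + dist u w := dist_triangle u' u w
        _ ≤ dist u w + ε := by rw [dist_comm u' u]; linarith
    linarith
  -- main quantities
  have ht : 0 < dist x y := dist_pos.mpr hxy
  set m : ℝ := min (bdist G₁ x) (bdist G₁ y) with hmdef
  have hm : 0 < m := lt_min (hbpos x hx) (hbpos y hy)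
  have hM : m + d ≤ min (bdist G₂ x) (bdist G₂ y) := by
    apply le_min
    · calc m + d ≤ bdist G₁ x + d := by
            have := min_le_left (bdist G₁ x) (bdist G₁ y); rw [← hmdef] at this; linarith
        _ ≤ bdist G₂ x := hbd x hx
    · calc m + d ≤ bdist G₁ y + d := by
            have := min_le_right (bdist G₁ x) (bdist G₁ y); rw [← hmdef] at this; linarith
        _ ≤ bdist G₂ y := hbd y hy
  have hD : 2*m + dist x y ≤ Metric.diam G₁ := by
    have := diam_ge hG₁o hG₁b hx hy hxy (hbpos x hx) (hbpos y hy)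
    have h1 : m ≤ bdist G₁ x := min_le_left _ _
    have h2 : m ≤ bdist G₁ y := min_le_right _ _
    rw [bdist] at h1 h2
    linarith
  simp only [jDist]
  exact key_ineq hm ht hd0 hM hD
end
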